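/- arXiv:1310.3031 — 6 statements merged into one kernel-verified Lean document; each statement's English description precedes it below -/
import Mathlib

section
/- Let G be a finite simple connected graph and let i, j be two adjacent vertices with d_i + d_j < √(2 vol G). Then the set S = {i, j} has positive modularity Q(S) > 0. Consequently, if the largest degree of G is smaller than √(vol G / 2), then G is not indivisible (i.e. G contains a subset of positive modularity). -/
open Matrix Finset

variable {n : ℕ}

/-- The real-valued degree of a vertex. -/
noncomputable def degR (G : SimpleGraph (Fin n)) [DecidableRel G.Adj] (i : Fin n) : ℝ :=
  (G.degree i : ℝ)

/-- The volume of a set of vertices: the sum of the degrees of its elements. -/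
noncomputable def volS (G : SimpleGraph (Fin n)) [DecidableRel G.Adj] (S : Finset (Fin n)) : ℝ :=
  ∑ i ∈ S, degR G i

/-- The volume of the graph: the sum of all degrees. -/
noncomputable def volG (G : SimpleGraph (Fin n)) [DecidableRel G.Adj] : ℝ :=
  ∑ i, degR G i

/-- `E(S)`: the set of edges with both endpoints in `S`. -/
def interiorEdges (G : SimpleGraph (Fin n)) [DecidableRel G.Adj] (S : Finset (Fin n)) :
    Finset (Sym2 (Fin n)) :=
  G.edgeFinset.filter (fun e => ∀ v ∈ e, v ∈ S)

/-- The modularity of a set of vertices: `Q(S) = 2|E(S)| - (vol S)²/(vol G)`. -/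
noncomputable def Qedge (G : SimpleGraph (Fin n)) [DecidableRel G.Adj] (S : Finset (Fin n)) : ℝ :=
  2 * (interiorEdges G S).card - volS G S ^ 2 / volG G

lemma degR_nonneg (G : SimpleGraph (Fin n)) [DecidableRel G.Adj] (i : Fin n) :
    0 ≤ degR G i := Nat.cast_nonneg _

lemma volG_nonneg (G : SimpleGraph (Fin n)) [DecidableRel G.Adj] :
    0 ≤ volG G := Finset.sum_nonneg fun i _ => degR_nonneg G i

lemma interior_pair (G : SimpleGraph (Fin n)) [DecidableRel G.Adj] {i j : Fin n}
    (h : G.Adj i j) : interiorEdges G {i, j} = {s(i, j)} := by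
  ext e
  simp only [interiorEdges, Finset.mem_filter, SimpleGraph.mem_edgeFinset,
    Finset.mem_singleton]
  constructor
  · rintro ⟨he, hv⟩
    induction e using Sym2.ind with
    | _ a b =>
      simp only [SimpleGraph.mem_edgeSet] at he
      have ha := hv a (Sym2.mem_mk_left a b)
      have hb := hv b (Sym2.mem_mk_right a b)
      simp only [Finset.mem_insert, Finset.mem_singleton] at ha hb
      have hab := he.ne
      rcases ha with rfl | rfl <;> rcases hb with rfl | rfl <;>
        simp_all [Sym2.eq_swap]
  · rintro rfl
    refine ⟨h, fun v hv => ?_⟩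
    rcases Sym2.mem_iff.mp hv with rfl | rfl <;> simp

lemma pair_part (G : SimpleGraph (Fin n)) [DecidableRel G.Adj]
    {i j : Fin n} (hij : G.Adj i j)
    (hlt : degR G i + degR G j < Real.sqrt (2 * volG G)) :
    0 < Qedge G {i, j} := by
  have hne : i ≠ j := hij.ne
  have hvs : volS G {i, j} = degR G i + degR G j := Finset.sum_pair hne
  have hcard : (interiorEdges G {i, j}).card = 1 := by
    rw [interior_pair G hij]; simp
  have hs0 : 0 ≤ degR G i + degR G j := by
    have := degR_nonneg G i; have := degR_nonneg G j; linarith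
  have hvolpos : 0 < volG G := by
    by_contra hle
    push_neg at hle
    have hv0 : volG G = 0 := le_antisymm hle (volG_nonneg G)
    rw [hv0] at hlt
    simp at hlt
    linarith
  have hsq : (degR G i + degR G j) ^ 2 < 2 * volG G := by
    have h2 : 0 ≤ 2 * volG G := by linarith
    calc (degR G i + degR G j) ^ 2 < Real.sqrt (2 * volG G) ^ 2 := by
          apply pow_lt_pow_left₀ hlt hs0 (by norm_num)
      _ = 2 * volG G := Real.sq_sqrt h2
  have hdiv : volS G {i, j} ^ 2 / volG G < 2 := by
    rw [hvs, div_lt_iff₀ hvolpos]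
    linarith
  unfold Qedge
  rw [hcard]
  push_cast
  linarith

/-- If `i ~ j` and `d_i + d_j < √(2 vol G)` then `S = {i,j}` has positive modularity.
Consequently, if the largest degree of `G` is smaller than `√(vol G / 2)` then `G`
is not indivisible, i.e. it contains a subset of positive modularity. -/
theorem pair_positive_modularity (G : SimpleGraph (Fin n)) [DecidableRel G.Adj]
    (hG : G.Connected) :
    (∀ i j : Fin n, G.Adj i j → degR G i + degR G j < Real.sqrt (2 * volG G) →
      0 < Qedge G {i, j}) ∧
    ((∀ v : Fin n, degR G v < Real.sqrt (volG G / 2)) →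
      ∃ S : Finset (Fin n), 0 < Qedge G S) := by
  constructor
  · exact fun i j hij hlt => pair_part G hij hlt
  · intro hv
    -- there must be an edge
    have hedge : ∃ i j : Fin n, G.Adj i j := by
      by_contra hno
      push_neg at hno
      have hvol0 : volG G = 0 := by
        apply Finset.sum_eq_zero
        intro i _
        unfold degR
        norm_cast
        rw [← SimpleGraph.card_neighborFinset_eq_degree]
        have : G.neighborFinset i = ∅ := by
          ext j; simp [hno]
        rw [this]; simp
      obtain ⟨v⟩ := hG.nonempty
      have := hv v
      rw [hvol0] at this
      simp at this
      exact absurd this (not_lt.mpr (degR_nonneg G v))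
    obtain ⟨i, j, hij⟩ := hedge
    refine ⟨{i, j}, pair_part G hij ?_⟩
    have h1 := hv i
    have h2 := hv j
    have key : 2 * Real.sqrt (volG G / 2) = Real.sqrt (2 * volG G) := by
      rw [show (2 : ℝ) * volG G = 4 * (volG G / 2) by ring,
        show (4 : ℝ) = 2 ^ 2 by norm_num,
        Real.sqrt_mul (by positivity), Real.sqrt_sq (by norm_num)]
    linarith
end

section
/- For any subset S of the vertex set V of a finite simple connected graph G on n vertices, the modularity satisfies Q(S) ≤ m(G) · |S| · |S̄| / n, where S̄ = V \ S and m(G) is the algebraic modularity of G. -/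
open Matrix Finset

variable {n : ℕ}

/-- The modularity matrix `M = A - d dᵀ / vol G`. -/
noncomputable def modM (G : SimpleGraph (Fin n)) [DecidableRel G.Adj] :
    Matrix (Fin n) (Fin n) ℝ :=
  G.adjMatrix ℝ - (volG G)⁻¹ • Matrix.vecMulVec (degR G) (degR G)

/-- The 0/1 characteristic vector of a set of vertices. -/
def indic (S : Finset (Fin n)) : Fin n → ℝ := fun i => if i ∈ S then 1 else 0

/-- The modularity of a set of vertices: `Q(S) = 𝟙_Sᵀ M 𝟙_S`. -/
noncomputable def Qmat (G : SimpleGraph (Fin n)) [DecidableRel G.Adj] (S : Finset (Fin n)) : ℝ :=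
  indic S ⬝ᵥ (modM G *ᵥ indic S)

/-- The algebraic modularity `m(G) = max { xᵀMx / xᵀx : x ≠ 0, xᵀ𝟙 = 0 }`. -/
noncomputable def algMod (G : SimpleGraph (Fin n)) [DecidableRel G.Adj] : ℝ :=
  sSup {r : ℝ | ∃ x : Fin n → ℝ, x ≠ 0 ∧ (∑ i, x i) = 0 ∧
    r = (x ⬝ᵥ (modM G *ᵥ x)) / (x ⬝ᵥ x)}

lemma sumrow (G : SimpleGraph (Fin n)) [DecidableRel G.Adj] (i : Fin n) :
    ∑ j, G.adjMatrix ℝ i j = degR G i := by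
  simp [SimpleGraph.adjMatrix_apply, degR, SimpleGraph.degree,
    SimpleGraph.neighborFinset_eq_filter, Finset.sum_boole]

lemma rowsum0 (G : SimpleGraph (Fin n)) [DecidableRel G.Adj] (i : Fin n) :
    ∑ j, modM G i j = 0 := by
  have h : ∑ j, modM G i j = degR G i - (volG G)⁻¹ * (degR G i * volG G) := by
    simp only [modM, Matrix.sub_apply, Matrix.smul_apply, vecMulVec_apply, smul_eq_mul,
      Finset.sum_sub_distrib, sumrow, ← Finset.mul_sum, volG]
  rw [h]
  rcases eq_or_ne (volG G) 0 with h0 | h0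
  · have hd : degR G i = 0 := by
      have := (Finset.sum_eq_zero_iff_of_nonneg
        (fun j _ => (Nat.cast_nonneg _ : (0:ℝ) ≤ degR G j))).mp h0
      exact this i (Finset.mem_univ i)
    simp [hd]
  · field_simp
    ring

lemma msymm (G : SimpleGraph (Fin n)) [DecidableRel G.Adj] (i j : Fin n) :
    modM G i j = modM G j i := by
  simp only [modM, Matrix.sub_apply, Matrix.smul_apply, vecMulVec_apply, smul_eq_mul,
    SimpleGraph.adjMatrix_apply]
  have : G.Adj i j ↔ G.Adj j i := ⟨SimpleGraph.Adj.symm, SimpleGraph.Adj.symm⟩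
  rw [if_congr this rfl rfl, mul_comm (degR G i)]

lemma colsum0 (G : SimpleGraph (Fin n)) [DecidableRel G.Adj] (j : Fin n) :
    ∑ i, modM G i j = 0 := by
  rw [Finset.sum_congr rfl (fun i _ => msymm G i j)]
  exact rowsum0 G j

lemma bil_eq (G : SimpleGraph (Fin n)) [DecidableRel G.Adj] (x y : Fin n → ℝ) :
    x ⬝ᵥ (modM G *ᵥ y) = ∑ i, ∑ j, x i * (modM G i j * y j) := by
  simp [dotProduct, mulVec, Finset.mul_sum]

-- bounded above
lemma bdd (G : SimpleGraph (Fin n)) [DecidableRel G.Adj] :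
    BddAbove {r : ℝ | ∃ x : Fin n → ℝ, x ≠ 0 ∧ (∑ i, x i) = 0 ∧
      r = (x ⬝ᵥ (modM G *ᵥ x)) / (x ⬝ᵥ x)} := by
  refine ⟨∑ i, ∑ j, |modM G i j|, ?_⟩
  rintro r ⟨x, hx, -, rfl⟩
  have hX : 0 < x ⬝ᵥ x := by
    rcases Function.ne_iff.mp hx with ⟨k, hk⟩
    simp only [Pi.zero_apply] at hk
    have hk' : x k ≠ 0 := hk
    have : (0:ℝ) < x k ^ 2 := by positivity
    calc (0:ℝ) < x k ^ 2 := this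
      _ ≤ ∑ i, x i ^ 2 := Finset.single_le_sum (fun i _ => sq_nonneg (x i)) (Finset.mem_univ k)
      _ = x ⬝ᵥ x := by simp [dotProduct, sq]
  rw [div_le_iff₀ hX, bil_eq]
  have key : ∀ i j, x i * (modM G i j * x j) ≤ |modM G i j| * (x ⬝ᵥ x) := by
    intro i j
    have h1 : x i * (modM G i j * x j) ≤ |modM G i j| * |x i * x j| := by
      calc x i * (modM G i j * x j) ≤ |x i * (modM G i j * x j)| := le_abs_self _
        _ = |modM G i j| * |x i * x j| := by rw [abs_mul, abs_mul, abs_mul]; ring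
    refine h1.trans (mul_le_mul_of_nonneg_left ?_ (abs_nonneg _))
    have hii : x i ^ 2 ≤ x ⬝ᵥ x := by
      rw [show x ⬝ᵥ x = ∑ k, x k ^ 2 by simp [dotProduct, sq]]
      exact Finset.single_le_sum (fun k _ => sq_nonneg (x k)) (Finset.mem_univ i)
    have hjj : x j ^ 2 ≤ x ⬝ᵥ x := by
      rw [show x ⬝ᵥ x = ∑ k, x k ^ 2 by simp [dotProduct, sq]]
      exact Finset.single_le_sum (fun k _ => sq_nonneg (x k)) (Finset.mem_univ j)
    calc |x i * x j| = |x i| * |x j| := abs_mul _ _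
      _ ≤ (x i ^ 2 + x j ^ 2) / 2 := by nlinarith [sq_abs (x i), sq_abs (x j), sq_nonneg (|x i| - |x j|)]
      _ ≤ x ⬝ᵥ x := by linarith
  calc ∑ i, ∑ j, x i * (modM G i j * x j)
      ≤ ∑ i, ∑ j, |modM G i j| * (x ⬝ᵥ x) :=
        Finset.sum_le_sum fun i _ => Finset.sum_le_sum fun j _ => key i j
    _ = (∑ i, ∑ j, |modM G i j|) * (x ⬝ᵥ x) := by rw [Finset.sum_mul]; congr 1; ext i; rw [Finset.sum_mul]

lemma sum_indic (S : Finset (Fin n)) : ∑ i, indic S i = (S.card : ℝ) := by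
  simp [indic, Finset.sum_boole]

lemma indic_mul_self (S : Finset (Fin n)) (i : Fin n) : indic S i * indic S i = indic S i := by
  unfold indic; split <;> ring

/-- For any subset `S` of the vertices of a finite simple connected graph `G` on `n`
vertices, `Q(S) ≤ m(G)·|S|·|S̄|/n`. -/
theorem modularity_le_algMod (G : SimpleGraph (Fin n)) [DecidableRel G.Adj]
    (hG : G.Connected) (S : Finset (Fin n)) :
    Qmat G S ≤ algMod G * (S.card : ℝ) * (Sᶜ.card : ℝ) / (n : ℝ) := by
  rcases S.eq_empty_or_nonempty with rfl | hS
  · simp [Qmat, indic, dotProduct]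
  rcases (Sᶜ).eq_empty_or_nonempty with hSc | hSc
  · have hSu : S = Finset.univ := by
      rwa [Finset.compl_eq_empty_iff] at hSc
    have hQ : Qmat G S = 0 := by
      rw [Qmat, bil_eq, hSu]
      simp [indic, rowsum0]
    rw [hQ, hSc]
    simp
  · -- main case
    obtain ⟨a, haS⟩ := hS
    obtain ⟨b, hbS⟩ := hSc
    have hn : 0 < n := a.pos
    have hnR : (0:ℝ) < n := by exact_mod_cast hn
    set s : ℝ := (S.card : ℝ) with hs
    set t : ℝ := (Sᶜ.card : ℝ) with ht
    have hspos : 0 < s := by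
      rw [hs]
      exact_mod_cast Finset.card_pos.mpr ⟨a, haS⟩
    have htpos : 0 < t := by
      rw [ht]
      exact_mod_cast Finset.card_pos.mpr ⟨b, hbS⟩
    have hst : s + t = n := by
      rw [hs, ht, ← Nat.cast_add, Finset.card_add_card_compl]
      simp
    set c : ℝ := s / n with hc
    set x : Fin n → ℝ := fun i => indic S i - c with hxdef
    have hsum : ∑ i, x i = 0 := by
      simp only [hxdef, Finset.sum_sub_distrib, sum_indic, Finset.sum_const,
        Finset.card_univ, Fintype.card_fin, nsmul_eq_mul, hc]
      field_simp
      simp [hs]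
    have hx0 : x ≠ 0 := by
      intro h
      have h1 : x a = 0 := by rw [h]; rfl
      have h2 : x b = 0 := by rw [h]; rfl
      have hbS' : b ∉ S := Finset.mem_compl.mp hbS
      simp only [hxdef, indic, haS, if_pos, hbS', if_neg, not_false_iff] at h1 h2
      linarith
    have hX : x ⬝ᵥ x = s * t / n := by
      have e : ∀ i, x i * x i = indic S i - 2 * c * indic S i + c * c := by
        intro i
        simp only [hxdef]
        have := indic_mul_self S i
        ring_nf
        nlinarith [indic_mul_self S i]
      rw [show x ⬝ᵥ x = ∑ i, x i * x i from rfl]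
      rw [Finset.sum_congr rfl (fun i _ => e i)]
      rw [Finset.sum_add_distrib, Finset.sum_sub_distrib, sum_indic, ← Finset.mul_sum, sum_indic]
      simp only [Finset.sum_const, Finset.card_univ, Fintype.card_fin, nsmul_eq_mul, hc]
      have htn : t = n - s := by linarith
      rw [htn]
      field_simp
      ring
    have hXpos : 0 < x ⬝ᵥ x := by rw [hX]; positivity
    have hMv : modM G *ᵥ x = modM G *ᵥ indic S := by
      ext i
      simp only [mulVec, dotProduct, hxdef, mul_sub, Finset.sum_sub_distrib,
        ← Finset.sum_mul, rowsum0, zero_mul, sub_zero]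
    have hsum2 : ∑ j, (modM G *ᵥ indic S) j = 0 := by
      simp only [mulVec, dotProduct]
      rw [Finset.sum_comm]
      apply Finset.sum_eq_zero
      intro j _
      rw [← Finset.sum_mul, colsum0, zero_mul]
    have hQx : x ⬝ᵥ (modM G *ᵥ x) = Qmat G S := by
      rw [hMv, Qmat]
      show ∑ i, x i * (modM G *ᵥ indic S) i = ∑ i, indic S i * (modM G *ᵥ indic S) i
      simp only [hxdef, sub_mul, Finset.sum_sub_distrib, ← Finset.mul_sum, hsum2, mul_zero,
        sub_zero]
    have hmem : Qmat G S / (x ⬝ᵥ x) ∈ {r : ℝ | ∃ y : Fin n → ℝ, y ≠ 0 ∧ (∑ i, y i) = 0 ∧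
        r = (y ⬝ᵥ (modM G *ᵥ y)) / (y ⬝ᵥ y)} := ⟨x, hx0, hsum, by rw [hQx]⟩
    have hle : Qmat G S / (x ⬝ᵥ x) ≤ algMod G := le_csSup (bdd G) hmem
    rw [div_le_iff₀ hXpos] at hle
    calc Qmat G S ≤ algMod G * (x ⬝ᵥ x) := hle
      _ = algMod G * s * t / n := by rw [hX]; ring
end

section
/- For any finite simple connected graph G on n ≥ 2 vertices with smallest degree d_min, the algebraic modularity satisfies m(G) ≥ −d_min/(n−1); this bound is attained when G is a complete graph (clique). -/
open Matrix Finset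

variable {n : ℕ}

section aux

variable (G : SimpleGraph (Fin n)) [DecidableRel G.Adj]

lemma row_sum (i : Fin n) : ∑ j, G.adjMatrix ℝ i j = degR G i := by
  simp [SimpleGraph.adjMatrix_apply, degR, SimpleGraph.degree,
    SimpleGraph.neighborFinset_eq_filter, Finset.sum_boole]

lemma col_sum (j : Fin n) : ∑ i, G.adjMatrix ℝ i j = degR G j := by
  rw [← row_sum G j]
  exact Finset.sum_congr rfl fun i _ => by
    simp [SimpleGraph.adjMatrix_apply, G.adj_comm]

lemma quad_eq (x : Fin n → ℝ) :
    x ⬝ᵥ (modM G *ᵥ x) = x ⬝ᵥ (G.adjMatrix ℝ *ᵥ x)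
      - (volG G)⁻¹ * ((degR G ⬝ᵥ x) * (degR G ⬝ᵥ x)) := by
  have h1 : ((volG G)⁻¹ • Matrix.vecMulVec (degR G) (degR G)) *ᵥ x
      = fun i => (volG G)⁻¹ * (degR G i * (degR G ⬝ᵥ x)) := by
    funext i
    simp only [mulVec, dotProduct, Matrix.smul_apply, Matrix.vecMulVec_apply,
      smul_eq_mul, Finset.mul_sum]
    exact Finset.sum_congr rfl fun j _ => by ring
  simp only [modM, Matrix.sub_mulVec, dotProduct_sub]
  congr 1
  rw [h1]
  simp only [dotProduct, Finset.mul_sum, Finset.sum_mul]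
  rw [Finset.sum_comm]
  exact Finset.sum_congr rfl fun i _ => Finset.sum_congr rfl fun j _ => by ring

lemma xx_pos {x : Fin n → ℝ} (hx : x ≠ 0) : 0 < x ⬝ᵥ x := by
  obtain ⟨k, hk⟩ := Function.ne_iff.mp hx
  exact Finset.sum_pos' (fun i _ => mul_self_nonneg (x i))
    ⟨k, Finset.mem_univ k, mul_self_pos.mpr hk⟩

lemma quad_le (M : Matrix (Fin n) (Fin n) ℝ) (x : Fin n → ℝ) :
    x ⬝ᵥ (M *ᵥ x) ≤ (∑ i, ∑ j, |M i j|) * (x ⬝ᵥ x) := by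
  have hsq : ∀ k, x k * x k ≤ x ⬝ᵥ x := fun k =>
    Finset.single_le_sum (fun i _ => mul_self_nonneg (x i)) (Finset.mem_univ k)
  have key : ∀ i j, x i * (M i j * x j) ≤ |M i j| * (x ⬝ᵥ x) := by
    intro i j
    calc x i * (M i j * x j) ≤ |x i * (M i j * x j)| := le_abs_self _
      _ = |M i j| * (|x i| * |x j|) := by rw [abs_mul, abs_mul]; ring
      _ ≤ |M i j| * (x ⬝ᵥ x) := by
          refine mul_le_mul_of_nonneg_left ?_ (abs_nonneg _)
          nlinarith [hsq i, hsq j, sq_nonneg (|x i| - |x j|),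
            abs_mul_abs_self (x i), abs_mul_abs_self (x j)]
  calc x ⬝ᵥ (M *ᵥ x) = ∑ i, ∑ j, x i * (M i j * x j) := by
        simp only [dotProduct, mulVec, Finset.mul_sum]
    _ ≤ ∑ i, ∑ j, |M i j| * (x ⬝ᵥ x) :=
        Finset.sum_le_sum fun i _ => Finset.sum_le_sum fun j _ => key i j
    _ = (∑ i, ∑ j, |M i j|) * (x ⬝ᵥ x) := by
        rw [Finset.sum_mul]
        exact Finset.sum_congr rfl fun i _ => (Finset.sum_mul _ _ _).symm

lemma bddAbove_set :
    BddAbove {r : ℝ | ∃ x : Fin n → ℝ, x ≠ 0 ∧ (∑ i, x i) = 0 ∧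
      r = (x ⬝ᵥ (modM G *ᵥ x)) / (x ⬝ᵥ x)} := by
  refine ⟨∑ i, ∑ j, |modM G i j|, ?_⟩
  rintro r ⟨x, hx0, -, rfl⟩
  have hp := xx_pos hx0
  rw [div_le_iff₀ hp]
  exact quad_le (modM G) x

end aux

/-- For any finite simple connected graph on `n ≥ 2` vertices,
`m(G) ≥ -d_min/(n-1)`, with equality when `G` is a complete graph. -/
theorem algMod_lower_bound (G : SimpleGraph (Fin n)) [DecidableRel G.Adj]
    (hG : G.Connected) (hn : 2 ≤ n) :
    -sInf (Set.range (degR G)) / ((n : ℝ) - 1) ≤ algMod G ∧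
    (G = ⊤ → algMod G = -sInf (Set.range (degR G)) / ((n : ℝ) - 1)) := by
  have hnR : (2:ℝ) ≤ (n:ℝ) := by exact_mod_cast hn
  have hn1 : (0:ℝ) < (n:ℝ) - 1 := by linarith
  have hnpos : (0:ℝ) < (n:ℝ) := by linarith
  have hne : (Set.range (degR G)).Nonempty := ⟨degR G ⟨0, by omega⟩, Set.mem_range_self _⟩
  have hfin : (Set.range (degR G)).Finite := Set.finite_range _
  obtain ⟨i₀, hi₀⟩ := hne.csInf_mem hfin
  have hle : ∀ i, sInf (Set.range (degR G)) ≤ degR G i :=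
    fun i => csInf_le hfin.bddBelow (Set.mem_range_self i)
  -- minimal degree is positive
  have hapos : 0 < degR G i₀ := by
    have hadj : ∃ j, G.Adj i₀ j := by
      obtain ⟨j, hj⟩ : ∃ j : Fin n, j ≠ i₀ :=
        Fintype.exists_ne_of_one_lt_card (by simp; omega) i₀
      obtain ⟨p⟩ := hG.preconnected i₀ j
      exact ⟨p.getVert 1, p.adj_snd (SimpleGraph.Walk.not_nil_of_ne hj.symm)⟩
    have := (G.degree_pos_iff_exists_adj i₀).mpr hadj
    unfold degR; exact_mod_cast this
  set a : ℝ := degR G i₀ with ha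
  have hv : (n:ℝ) * a ≤ volG G := by
    have : ∑ _i : Fin n, a ≤ volG G := Finset.sum_le_sum fun i _ => hi₀ ▸ hle i
    simpa using this
  have hvpos : 0 < volG G := lt_of_lt_of_le (by positivity) hv
  -- the test vector
  set x : Fin n → ℝ := fun j => (n:ℝ) * (if j = i₀ then 1 else 0) - 1 with hxdef
  have hx0 : x ≠ 0 := by
    intro h
    have := congrFun h i₀
    simp only [hxdef, if_pos rfl, Pi.zero_apply] at this
    norm_num at this
    linarith
  have hsum : ∑ j, x j = 0 := by
    simp only [hxdef]
    rw [Finset.sum_sub_distrib, ← Finset.mul_sum]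
    simp [Finset.sum_ite_eq']
  have hxx : x ⬝ᵥ x = (n:ℝ)^2 - (n:ℝ) := by
    have hptw : ∀ j, x j * x j = ((n:ℝ)^2 - 2*(n:ℝ)) * (if j = i₀ then (1:ℝ) else 0) + 1 := by
      intro j; by_cases h : j = i₀ <;> simp [hxdef, h] <;> ring
    simp only [dotProduct]
    rw [Finset.sum_congr rfl fun j _ => hptw j, Finset.sum_add_distrib, ← Finset.mul_sum]
    simp [Finset.sum_ite_eq']
    ring
  have hdx : degR G ⬝ᵥ x = (n:ℝ) * a - volG G := by
    have hptw : ∀ j, degR G j * x j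
        = (n:ℝ) * (if j = i₀ then degR G i₀ else 0) - degR G j := by
      intro j; by_cases h : j = i₀ <;> simp [hxdef, h] <;> ring
    simp only [dotProduct]
    rw [Finset.sum_congr rfl fun j _ => hptw j, Finset.sum_sub_distrib, ← Finset.mul_sum]
    simp [Finset.sum_ite_eq', volG, ha]
  have hAx : ∀ i, (G.adjMatrix ℝ *ᵥ x) i = (n:ℝ) * G.adjMatrix ℝ i i₀ - degR G i := by
    intro i
    have hptw : ∀ j, G.adjMatrix ℝ i j * x j
        = (n:ℝ) * (if j = i₀ then G.adjMatrix ℝ i i₀ else 0) - G.adjMatrix ℝ i j := by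
      intro j
      simp only [hxdef]
      by_cases h : j = i₀
      · rw [if_pos h, if_pos h, h]; ring
      · rw [if_neg h, if_neg h]; ring
    simp only [mulVec, dotProduct]
    rw [Finset.sum_congr rfl fun j _ => hptw j, Finset.sum_sub_distrib, ← Finset.mul_sum,
      row_sum]
    simp [Finset.sum_ite_eq']
  have ht1 : x ⬝ᵥ (G.adjMatrix ℝ *ᵥ x) = volG G - 2*(n:ℝ)*a := by
    have hptw : ∀ i, x i * ((n:ℝ) * G.adjMatrix ℝ i i₀ - degR G i)
        = degR G i - (n:ℝ) * G.adjMatrix ℝ i i₀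
          - (n:ℝ) * (if i = i₀ then degR G i₀ else 0) := by
      intro i
      simp only [hxdef]
      by_cases h : i = i₀
      · have h0 : G.adjMatrix ℝ i i₀ = 0 := by rw [h]; simp
        rw [if_pos h, if_pos h, h0, h]; ring
      · rw [if_neg h, if_neg h]; ring
    simp only [dotProduct]
    rw [Finset.sum_congr rfl fun i _ => by rw [hAx i, hptw i], Finset.sum_sub_distrib,
      Finset.sum_sub_distrib, ← Finset.mul_sum, ← Finset.mul_sum, col_sum]
    simp only [Finset.sum_ite_eq', Finset.mem_univ, if_pos]
    show volG G - (n:ℝ) * a - (n:ℝ) * a = _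
    ring
  have hq : x ⬝ᵥ (modM G *ᵥ x) = -((n:ℝ)^2 * a^2) / volG G := by
    rw [quad_eq, ht1, hdx]
    field_simp
    ring
  have hmem : (x ⬝ᵥ (modM G *ᵥ x)) / (x ⬝ᵥ x) ∈
      {r : ℝ | ∃ y : Fin n → ℝ, y ≠ 0 ∧ (∑ i, y i) = 0 ∧
        r = (y ⬝ᵥ (modM G *ᵥ y)) / (y ⬝ᵥ y)} := ⟨x, hx0, hsum, rfl⟩
  have hlow : -sInf (Set.range (degR G)) / ((n : ℝ) - 1) ≤ algMod G := by
    have hrle : -a / ((n:ℝ) - 1) ≤ (x ⬝ᵥ (modM G *ᵥ x)) / (x ⬝ᵥ x) := by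
      rw [hq, hxx, div_div]
      have hden : (0:ℝ) < (n:ℝ)^2 - (n:ℝ) := by nlinarith [mul_pos hnpos hn1]
      rw [div_le_div_iff₀ hn1 (mul_pos hvpos hden)]
      nlinarith [mul_nonneg (sub_nonneg.mpr hv) (le_of_lt (mul_pos (mul_pos hapos hnpos) hn1))]
    calc -sInf (Set.range (degR G)) / ((n : ℝ) - 1) = -a / ((n:ℝ)-1) := by rw [← hi₀]
      _ ≤ (x ⬝ᵥ (modM G *ᵥ x)) / (x ⬝ᵥ x) := hrle
      _ ≤ algMod G := le_csSup (bddAbove_set G) hmem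
  refine ⟨hlow, fun hT => ?_⟩
  subst hT
  -- degrees in the complete graph
  have hdeg : ∀ i, degR (⊤ : SimpleGraph (Fin n)) i = (n:ℝ) - 1 := by
    intro i
    have hd : (⊤ : SimpleGraph (Fin n)).degree i = n - 1 := by
      convert SimpleGraph.complete_graph_degree i using 2
      simp
    unfold degR
    rw [hd, Nat.cast_sub (by omega), Nat.cast_one]
  -- every admissible Rayleigh quotient equals -1
  have hsub : ∀ r ∈ {r : ℝ | ∃ y : Fin n → ℝ, y ≠ 0 ∧ (∑ i, y i) = 0 ∧
      r = (y ⬝ᵥ (modM (⊤ : SimpleGraph (Fin n)) *ᵥ y)) / (y ⬝ᵥ y)}, r = -1 := by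
    rintro r ⟨y, hy0, hysum, rfl⟩
    have hyy := xx_pos hy0
    have hdy : degR (⊤ : SimpleGraph (Fin n)) ⬝ᵥ y = 0 := by
      simp only [dotProduct]
      rw [Finset.sum_congr rfl fun i _ => by rw [hdeg i], ← Finset.mul_sum, hysum, mul_zero]
    have hAy : ∀ i, ((⊤ : SimpleGraph (Fin n)).adjMatrix ℝ *ᵥ y) i = -y i := by
      intro i
      have hptw : ∀ j, (⊤ : SimpleGraph (Fin n)).adjMatrix ℝ i j * y j
          = y j - (if j = i then y i else 0) := by
        intro j
        by_cases h : j = i <;>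
          simp [SimpleGraph.adjMatrix_apply, SimpleGraph.top_adj, h, Ne.symm]
      simp only [mulVec, dotProduct]
      rw [Finset.sum_congr rfl fun j _ => hptw j, Finset.sum_sub_distrib, hysum]
      simp [Finset.sum_ite_eq']
    have hty : y ⬝ᵥ ((⊤ : SimpleGraph (Fin n)).adjMatrix ℝ *ᵥ y) = -(y ⬝ᵥ y) := by
      simp only [dotProduct]
      rw [Finset.sum_congr rfl fun i _ => by rw [hAy i]]
      simp [mul_neg, Finset.sum_neg_distrib]
    have : y ⬝ᵥ (modM (⊤ : SimpleGraph (Fin n)) *ᵥ y) = -(y ⬝ᵥ y) := by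
      rw [quad_eq, hty, hdy]
      ring
    rw [this, neg_div, div_self hyy.ne']
  have hSeq : {r : ℝ | ∃ y : Fin n → ℝ, y ≠ 0 ∧ (∑ i, y i) = 0 ∧
      r = (y ⬝ᵥ (modM (⊤ : SimpleGraph (Fin n)) *ᵥ y)) / (y ⬝ᵥ y)} = {-1} := by
    apply Set.Subset.antisymm
    · intro r hr; exact hsub r hr
    · intro r hr
      rw [Set.mem_singleton_iff] at hr
      subst hr
      rw [← hsub _ hmem]
      exact hmem
  have hrange : Set.range (degR (⊤ : SimpleGraph (Fin n))) = {(n:ℝ) - 1} := by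
    have : Nonempty (Fin n) := ⟨⟨0, by omega⟩⟩
    rw [show degR (⊤ : SimpleGraph (Fin n)) = fun _ => (n:ℝ) - 1 from funext hdeg]
    exact Set.range_const
  rw [algMod, hSeq, csSup_singleton, hrange, csInf_singleton, neg_div, div_self hn1.ne']
end

section
/- Let A be the (possibly weighted, loops allowed) adjacency matrix of a finite simple connected graph G on n vertices. Let λ ∈ ℝ and u ∈ ℝⁿ be such that u has at least two entries of opposite signs and Au ≥ λu componentwise. Let ℓ be the number of eigenvalues of A (counted with multiplicity) that are ≥ λ. Then u induces at most ℓ positive strong nodal domains on G. -/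
open Matrix Finset

variable {n : ℕ}

/-- The simple graph underlying a symmetric matrix `A`: distinct vertices `i, j`
are adjacent iff `A i j ≠ 0` (loops are discarded). -/
def matGraph (A : Matrix (Fin n) (Fin n) ℝ) : SimpleGraph (Fin n) where
  Adj i j := i ≠ j ∧ (A i j ≠ 0 ∨ A j i ≠ 0)
  symm := ⟨fun i j h => ⟨h.1.symm, h.2.symm⟩⟩
  loopless := ⟨fun i h => h.1 rfl⟩

/-- `S` is a positive strong nodal domain of `G` induced by `u`: a maximal
connected subset of `{i : u i > 0}`. -/
def IsPosStrongNodalDomain (G : SimpleGraph (Fin n)) (u : Fin n → ℝ)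
    (S : Set (Fin n)) : Prop :=
  S ⊆ {i | 0 < u i} ∧ (G.induce S).Connected ∧
    ∀ T : Set (Fin n), S ⊆ T → T ⊆ {i | 0 < u i} → (G.induce T).Connected → T = S

lemma dot_eq_inner (x y : EuclideanSpace ℝ (Fin n)) :
    (inner ℝ x y : ℝ) = (x : Fin n → ℝ) ⬝ᵥ (y : Fin n → ℝ) := by
  simp [PiLp.inner_apply, dotProduct, mul_comm]

lemma dotProduct_sum' {ι : Type*} (x : Fin n → ℝ) (s : Finset ι) (f : ι → Fin n → ℝ) :
    x ⬝ᵥ (∑ t ∈ s, f t) = ∑ t ∈ s, x ⬝ᵥ f t := by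
  simp only [dotProduct, Finset.sum_apply, Finset.mul_sum]
  rw [Finset.sum_comm]

lemma sum_dotProduct' {ι : Type*} (s : Finset ι) (f : ι → Fin n → ℝ) (x : Fin n → ℝ) :
    (∑ t ∈ s, f t) ⬝ᵥ x = ∑ t ∈ s, f t ⬝ᵥ x := by
  simp only [dotProduct, Finset.sum_apply, Finset.sum_mul]
  rw [Finset.sum_comm]

lemma quad_form_card_bound (A : Matrix (Fin n) (Fin n) ℝ) (hA : A.IsHermitian) (lam : ℝ)
    (k : ℕ) (v : Fin k → (Fin n → ℝ))
    (hli : LinearIndependent ℝ v)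
    (horth : ∀ i j, i ≠ j → v i ⬝ᵥ v j = 0)
    (hAorth : ∀ i j, i ≠ j → v i ⬝ᵥ (A *ᵥ v j) = 0)
    (hdiag : ∀ i, lam * (v i ⬝ᵥ v i) ≤ v i ⬝ᵥ (A *ᵥ v i)) :
    k ≤ (Finset.univ.filter (fun i => lam ≤ hA.eigenvalues i)).card := by
  classical
  by_contra hlt
  push_neg at hlt
  set ℓ := (Finset.univ.filter (fun i => lam ≤ hA.eigenvalues i)).card with hℓ
  set e : Fin n → (Fin n → ℝ) := fun i => ⇑(hA.eigenvectorBasis i) with he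
  set w : (Fin k → ℝ) → (Fin n → ℝ) := fun c => ∑ t, c t • v t with hw
  have hwadd : ∀ c c', w (c + c') = w c + w c' := by
    intro c c'; simp [hw, add_smul, Finset.sum_add_distrib]
  have hwsmul : ∀ (a : ℝ) c, w (a • c) = a • w c := by
    intro a c; simp [hw, smul_smul, Finset.smul_sum]
  set M : (Fin k → ℝ) →ₗ[ℝ] ({i // lam ≤ hA.eigenvalues i} → ℝ) :=
    { toFun := fun c i => e i.1 ⬝ᵥ w c
      map_add' := fun c c' => by funext i; simp [hwadd, dotProduct_add]
      map_smul' := fun a c => by funext i; simp [hwsmul, dotProduct_smul] } with hM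
  have hcard : Fintype.card {i // lam ≤ hA.eigenvalues i} = ℓ := by
    simp [hℓ, Fintype.card_subtype, Finset.filter_congr_decidable]
  have hker : ∃ c : Fin k → ℝ, c ≠ 0 ∧ M c = 0 := by
    by_contra hc
    push_neg at hc
    have hinj : Function.Injective M := by
      rw [← LinearMap.ker_eq_bot, Submodule.eq_bot_iff]
      intro c hcc
      by_contra h0
      exact (hc c h0) hcc
    have := LinearMap.finrank_le_finrank_of_injective hinj
    rw [Module.finrank_fintype_fun_eq_card, Module.finrank_fintype_fun_eq_card,
      Fintype.card_fin, hcard] at this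
    omega
  obtain ⟨c, hc0, hMc⟩ := hker
  set W : Fin n → ℝ := w c with hW
  have hW0 : W ≠ 0 := by
    intro h
    rw [Fintype.linearIndependent_iff] at hli
    exact hc0 (funext fun i => hli c h i)
  -- lower bound on quadratic form
  have hAW : A *ᵥ W = ∑ t, c t • (A *ᵥ v t) := by
    simp only [hW, hw, ← Matrix.mulVecLin_apply, map_sum, LinearMap.map_smul]
  have hWdot : ∀ y : Fin n → ℝ, W ⬝ᵥ y = ∑ s, c s * (v s ⬝ᵥ y) := by
    intro y
    simp only [hW, hw, sum_dotProduct', smul_dotProduct, smul_eq_mul]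
  have hQlow : lam * (W ⬝ᵥ W) ≤ W ⬝ᵥ (A *ᵥ W) := by
    have h1 : W ⬝ᵥ (A *ᵥ W) = ∑ t, c t ^ 2 * (v t ⬝ᵥ (A *ᵥ v t)) := by
      rw [hAW, dotProduct_sum']
      apply Finset.sum_congr rfl
      intro t _
      rw [dotProduct_smul, smul_eq_mul, hWdot]
      rw [Finset.sum_eq_single t]
      · ring
      · intro s _ hst; rw [hAorth s t hst, mul_zero]
      · simp
    have h2 : W ⬝ᵥ W = ∑ t, c t ^ 2 * (v t ⬝ᵥ v t) := by
      nth_rewrite 2 [hW]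
      rw [hw, dotProduct_sum']
      apply Finset.sum_congr rfl
      intro t _
      rw [dotProduct_smul, smul_eq_mul, hWdot]
      rw [Finset.sum_eq_single t]
      · ring
      · intro s _ hst; rw [horth s t hst, mul_zero]
      · simp
    rw [h1, h2, Finset.mul_sum]
    apply Finset.sum_le_sum
    intro s _
    calc lam * (c s ^ 2 * (v s ⬝ᵥ v s)) = c s ^ 2 * (lam * (v s ⬝ᵥ v s)) := by ring
    _ ≤ c s ^ 2 * (v s ⬝ᵥ (A *ᵥ v s)) := by
        exact mul_le_mul_of_nonneg_left (hdiag s) (sq_nonneg _)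
  -- eigen-expansion
  set d : Fin n → ℝ := fun i => e i ⬝ᵥ W with hd
  have hdgood : ∀ i, lam ≤ hA.eigenvalues i → d i = 0 := by
    intro i hi
    have := congrFun hMc ⟨i, hi⟩
    simpa [hM] using this
  have hrepr : ∑ i, d i • e i = W := by
    have := congrArg WithLp.ofLp (hA.eigenvectorBasis.sum_repr' (WithLp.toLp 2 W : EuclideanSpace ℝ (Fin n)))
    simp only [WithLp.ofLp_sum, WithLp.ofLp_smul] at this
    have h2 : ∀ i, (inner ℝ (hA.eigenvectorBasis i) (WithLp.toLp 2 W : EuclideanSpace ℝ (Fin n)) : ℝ) = d i := by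
      intro i; rw [dot_eq_inner]
    calc ∑ i, d i • e i = ∑ i, (inner ℝ (hA.eigenvectorBasis i) (WithLp.toLp 2 W : EuclideanSpace ℝ (Fin n)) : ℝ) • e i := by
          simp only [h2]
    _ = W := this
  have hWd : W ⬝ᵥ W = ∑ i, d i ^ 2 := by
    nth_rewrite 2 [← hrepr]
    rw [dotProduct_sum']
    congr 1; funext i
    rw [dotProduct_smul, smul_eq_mul, dotProduct_comm]
    rw [show e i ⬝ᵥ W = d i from rfl]; ring
  have hQW : W ⬝ᵥ (A *ᵥ W) = ∑ i, hA.eigenvalues i * d i ^ 2 := by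
    nth_rewrite 2 [← hrepr]
    have hAe : ∀ i, A *ᵥ e i = hA.eigenvalues i • e i := fun i => hA.mulVec_eigenvectorBasis i
    have : A *ᵥ (∑ i, d i • e i) = ∑ i, (d i * hA.eigenvalues i) • e i := by
      simp only [← Matrix.mulVecLin_apply, map_sum, LinearMap.map_smul]
      apply Finset.sum_congr rfl
      intro i _
      rw [Matrix.mulVecLin_apply, hAe i, smul_smul]
    rw [this, dotProduct_sum']
    congr 1; funext i
    rw [dotProduct_smul, smul_eq_mul, dotProduct_comm]
    rw [show e i ⬝ᵥ W = d i from rfl]; ring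
  have hdex : ∃ i, d i ≠ 0 := by
    by_contra hall
    push_neg at hall
    apply hW0
    rw [← hrepr]
    simp [hall]
  obtain ⟨i0, hi0⟩ := hdex
  have hbad : hA.eigenvalues i0 < lam := by
    by_contra hb
    push_neg at hb
    exact hi0 (hdgood i0 hb)
  have hQup : W ⬝ᵥ (A *ᵥ W) < lam * (W ⬝ᵥ W) := by
    rw [hQW, hWd, Finset.mul_sum]
    apply Finset.sum_lt_sum
    · intro i _
      rcases le_or_gt lam (hA.eigenvalues i) with h | h
      · rw [hdgood i h]; simp
      · exact mul_le_mul_of_nonneg_right h.le (sq_nonneg _)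
    · exact ⟨i0, Finset.mem_univ _, by
        apply mul_lt_mul_of_pos_right hbad
        positivity⟩
  linarith

/-- Let `A` be the (possibly weighted, loops allowed) adjacency matrix of a finite
simple connected graph. If `u` has two entries of opposite signs and `Au ≥ λu`
componentwise, then `u` induces at most `ℓ` positive strong nodal domains, where
`ℓ` is the number of eigenvalues of `A` that are `≥ λ` (with multiplicity). -/
theorem pos_strong_nodal_domains_bound (A : Matrix (Fin n) (Fin n) ℝ)
    (hA : A.IsHermitian) (hnonneg : ∀ i j, 0 ≤ A i j)
    (hconn : (matGraph A).Connected)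
    (lam : ℝ) (u : Fin n → ℝ)
    (hpos : ∃ i, 0 < u i) (hneg : ∃ j, u j < 0)
    (hAu : ∀ i, lam * u i ≤ (A *ᵥ u) i) :
    {S : Set (Fin n) | IsPosStrongNodalDomain (matGraph A) u S}.ncard ≤
      (Finset.univ.filter (fun i => lam ≤ hA.eigenvalues i)).card := by
  classical
  set G := matGraph A with hG
  set D := {S : Set (Fin n) | IsPosStrongNodalDomain G u S} with hD
  -- absorption: a positive vertex adjacent to a domain lies in the domain
  have habs : ∀ S ∈ D, ∀ i ∈ S, ∀ j, 0 < u j → G.Adj i j → j ∈ S := by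
    intro S hS i hi j hj hadj
    obtain ⟨hSpos, hSconn, hSmax⟩ := hS
    have hpair : (G.induce {i, j}).Connected := SimpleGraph.induce_pair_connected_of_adj hadj
    have hconn' : (G.induce (S ∪ {i, j})).Connected :=
      SimpleGraph.induce_union_connected hSconn.preconnected hpair.preconnected ⟨i, hi, by simp⟩
    have hTsub : S ∪ {i, j} ⊆ {x | 0 < u x} := by
      intro x hx
      rcases hx with hx | hx
      · exact hSpos hx
      · rcases hx with rfl | hx
        · exact hSpos hi
        · rw [Set.mem_singleton_iff] at hx
          subst hx
          exact hj
    have hTS := hSmax _ Set.subset_union_left hTsub hconn'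
    rw [← hTS]
    exact Or.inr (Or.inr rfl)
  -- distinct domains are disjoint
  have hdisj : ∀ S ∈ D, ∀ T ∈ D, S ≠ T → ∀ x, x ∈ S → x ∉ T := by
    intro S hS T hT hne x hxS hxT
    obtain ⟨hSpos, hSconn, hSmax⟩ := hS
    obtain ⟨hTpos, hTconn, hTmax⟩ := hT
    have hUconn : (G.induce (S ∪ T)).Connected :=
      SimpleGraph.induce_union_connected hSconn.preconnected hTconn.preconnected ⟨x, hxS, hxT⟩
    have h1 := hSmax _ Set.subset_union_left (Set.union_subset hSpos hTpos) hUconn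
    have hTS : T ⊆ S := by rw [← h1]; exact Set.subset_union_right
    exact hne (hTmax S hTS hSpos hSconn)
  -- no edges between distinct domains
  have hcross : ∀ S ∈ D, ∀ T ∈ D, S ≠ T → ∀ i ∈ S, ∀ j ∈ T, A i j = 0 := by
    intro S hS T hT hne i hi j hj
    by_contra hne0
    have hij : i ≠ j := fun h => hdisj S hS T hT hne i hi (h ▸ hj)
    have hadj : G.Adj i j := (show i ≠ j ∧ (A i j ≠ 0 ∨ A j i ≠ 0) from ⟨hij, Or.inl hne0⟩)
    have : j ∈ S := habs S hS i hi j (hT.1 hj) hadj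
    exact hdisj S hS T hT hne j this hj
  -- the indicator vectors
  have hfin : D.Finite := Set.toFinite _
  haveI : Fintype ↥D := hfin.fintype
  set k := Fintype.card ↥D with hk
  set σ : Fin k → ↥D := fun t => (Fintype.equivFin ↥D).symm t with hσ
  have hσinj : Function.Injective σ := fun a b h => (Fintype.equivFin ↥D).symm.injective h
  set v : Fin k → (Fin n → ℝ) := fun t i => if i ∈ (σ t : Set (Fin n)) then u i else 0 with hv
  have hσne : ∀ t t' : Fin k, t ≠ t' → (σ t : Set (Fin n)) ≠ (σ t' : Set (Fin n)) := by
    intro t t' htt h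
    exact htt (hσinj (Subtype.coe_injective h))
  have hmem : ∀ t : Fin k, (σ t : Set (Fin n)) ∈ D := fun t => (σ t).2
  have hvpos : ∀ t i, i ∈ (σ t : Set (Fin n)) → 0 < v t i := by
    intro t i hi
    rw [hv]; simp only [if_pos hi]
    exact (hmem t).1 hi
  -- orthogonality
  have horth : ∀ t t' : Fin k, t ≠ t' → v t ⬝ᵥ v t' = 0 := by
    intro t t' htt
    apply Finset.sum_eq_zero
    intro i _
    by_cases hiS : i ∈ (σ t : Set (Fin n))
    · by_cases hiT : i ∈ (σ t' : Set (Fin n))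
      · exact absurd hiT (hdisj _ (hmem t) _ (hmem t') (hσne t t' htt) i hiS)
      · simp [hv, hiT]
    · simp [hv, hiS]
  -- A-orthogonality
  have hAorth : ∀ t t' : Fin k, t ≠ t' → v t ⬝ᵥ (A *ᵥ v t') = 0 := by
    intro t t' htt
    apply Finset.sum_eq_zero
    intro i _
    by_cases hiS : i ∈ (σ t : Set (Fin n))
    · have : (A *ᵥ v t') i = 0 := by
        show (∑ j, A i j * v t' j) = 0
        apply Finset.sum_eq_zero
        intro j _
        by_cases hjT : j ∈ (σ t' : Set (Fin n))
        · rw [hcross _ (hmem t) _ (hmem t') (hσne t t' htt) i hiS j hjT, zero_mul]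
        · simp [hv, hjT]
      rw [this, mul_zero]
    · simp [hv, hiS]
  -- diagonal bound
  have hdiag : ∀ t : Fin k, lam * (v t ⬝ᵥ v t) ≤ v t ⬝ᵥ (A *ᵥ v t) := by
    intro t
    rw [dotProduct, dotProduct, Finset.mul_sum]
    apply Finset.sum_le_sum
    intro i _
    by_cases hiS : i ∈ (σ t : Set (Fin n))
    · have hui : 0 < u i := (hmem t).1 hiS
      have hvi : v t i = u i := by simp [hv, hiS]
      have hineq : lam * u i ≤ (A *ᵥ v t) i := by
        calc lam * u i ≤ (A *ᵥ u) i := hAu i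
        _ ≤ (A *ᵥ v t) i := by
            simp only [Matrix.mulVec, dotProduct]
            apply Finset.sum_le_sum
            intro j _
            by_cases hjS : j ∈ (σ t : Set (Fin n))
            · simp [hv, hjS, le_refl]
            · have huj : A i j * u j ≤ 0 := by
                by_cases hAij : A i j = 0
                · rw [hAij, zero_mul]
                · have hij : i ≠ j := fun h => hjS (h ▸ hiS)
                  have hadj : G.Adj i j := (show i ≠ j ∧ (A i j ≠ 0 ∨ A j i ≠ 0) from ⟨hij, Or.inl hAij⟩)
                  have hujle : u j ≤ 0 := by
                    by_contra hc
                    push_neg at hc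
                    exact hjS (habs _ (hmem t) i hiS j hc hadj)
                  exact mul_nonpos_of_nonneg_of_nonpos (hnonneg i j) hujle
              calc A i j * u j ≤ 0 := huj
              _ = A i j * v t j := by simp [hv, hjS]
      calc lam * (v t i * v t i) = (lam * u i) * u i := by rw [hvi]; ring
      _ ≤ (A *ᵥ v t) i * u i := mul_le_mul_of_nonneg_right hineq hui.le
      _ = v t i * (A *ᵥ v t) i := by rw [hvi]; ring
    · simp [hv, hiS]
  -- linear independence
  have hli : LinearIndependent ℝ v := by
    rw [Fintype.linearIndependent_iff]
    intro g hg t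
    obtain ⟨x, hx⟩ : ∃ x, x ∈ (σ t : Set (Fin n)) := by
      obtain ⟨⟨x, hx⟩⟩ := (hmem t).2.1.nonempty
      exact ⟨x, hx⟩
    have hgx := congrFun hg x
    rw [Finset.sum_apply] at hgx
    rw [Finset.sum_eq_single t] at hgx
    · have : v t x = u x := by simp [hv, hx]
      simp only [Pi.smul_apply, smul_eq_mul, this, Pi.zero_apply] at hgx
      have hux : 0 < u x := (hmem t).1 hx
      rcases mul_eq_zero.mp hgx with h | h
      · exact h
      · exact absurd h hux.ne'
    · intro s _ hst
      have hxs : x ∉ (σ s : Set (Fin n)) := by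
        intro hxs
        exact hdisj _ (hmem s) _ (hmem t) (hσne s t hst) x hxs hx
      simp [hv, hxs]
    · simp
  -- conclude
  have hkey := quad_form_card_bound A hA lam k v hli horth hAorth hdiag
  have hncard : D.ncard = k := by
    rw [← Nat.card_coe_set_eq, Nat.card_eq_fintype_card]
  rw [hncard]
  exact hkey
end

section
/- Let M be the modularity matrix of a finite simple connected graph G, let λ be an eigenvalue of M with associated eigenvector u oriented so that d^T u ≥ 0, and suppose u has at least two entries of opposite signs. Let ℓ and ℓ' be the numbers of eigenvalues of M, counted with multiplicity, that are ≥ λ and > λ respectively. Then u induces at most ℓ+1 positive strong nodal domains and at most ℓ'+1 positive weak nodal domains on G. -/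
open Matrix Finset

variable {n : ℕ}

/-- `S` is a positive weak nodal domain of `G` induced by `u`: a maximal
connected subset of `{i : u i ≥ 0}` containing a vertex where `u` is nonzero. -/
def IsPosWeakNodalDomain (G : SimpleGraph (Fin n)) (u : Fin n → ℝ)
    (S : Set (Fin n)) : Prop :=
  S ⊆ {i | 0 ≤ u i} ∧ (∃ i ∈ S, u i ≠ 0) ∧ (G.induce S).Connected ∧
    ∀ T : Set (Fin n), S ⊆ T → T ⊆ {i | 0 ≤ u i} → (G.induce T).Connected → T = S

/-! ### Auxiliary lemmas -/

section SpectralAux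

lemma herm_expansion (M : Matrix (Fin n) (Fin n) ℝ) (hM : M.IsHermitian) :
    ∃ w : Fin n → (Fin n → ℝ),
      (∀ i, M *ᵥ w i = hM.eigenvalues i • w i) ∧
      (∀ x : Fin n → ℝ, x = ∑ i, (w i ⬝ᵥ x) • w i) := by
  refine ⟨fun i => ⇑(hM.eigenvectorBasis i), fun i => hM.mulVec_eigenvectorBasis i, fun x => ?_⟩
  have h := (hM.eigenvectorBasis).sum_repr' (WithLp.toLp 2 x : EuclideanSpace ℝ (Fin n))
  have h2 : ∀ i, (inner ℝ (hM.eigenvectorBasis i) (WithLp.toLp 2 x : EuclideanSpace ℝ (Fin n)) : ℝ)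
      = (⇑(hM.eigenvectorBasis i) : Fin n → ℝ) ⬝ᵥ x := by
    intro i
    simp [PiLp.inner_apply, dotProduct, RCLike.inner_apply, mul_comm]
  simp_rw [h2] at h
  have h3 := congrArg WithLp.ofLp h
  simp at h3
  exact h3.symm

lemma dot_sum_right {ι : Type*} (s : Finset ι) (v : Fin n → ℝ) (f : ι → Fin n → ℝ) :
    v ⬝ᵥ (∑ i ∈ s, f i) = ∑ i ∈ s, v ⬝ᵥ f i := by
  simp only [dotProduct, Finset.sum_apply, Finset.mul_sum]
  exact Finset.sum_comm

lemma sum_dot_left {ι : Type*} (s : Finset ι) (v : Fin n → ℝ) (f : ι → Fin n → ℝ) :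
    (∑ i ∈ s, f i) ⬝ᵥ v = ∑ i ∈ s, f i ⬝ᵥ v := by
  rw [dotProduct_comm, dot_sum_right]
  exact Finset.sum_congr rfl fun i _ => dotProduct_comm _ _

lemma mulVec_sum' {ι : Type*} (s : Finset ι) (A : Matrix (Fin n) (Fin n) ℝ)
    (f : ι → Fin n → ℝ) : A *ᵥ (∑ i ∈ s, f i) = ∑ i ∈ s, A *ᵥ f i := by
  funext k
  simp only [mulVec, dotProduct, Finset.sum_apply, Finset.mul_sum]
  exact Finset.sum_comm

lemma quad_form_eq (M : Matrix (Fin n) (Fin n) ℝ) (eig : Fin n → ℝ)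
    (w : Fin n → Fin n → ℝ)
    (hw1 : ∀ i, M *ᵥ w i = eig i • w i)
    (hw2 : ∀ x : Fin n → ℝ, x = ∑ i, (w i ⬝ᵥ x) • w i)
    (x : Fin n → ℝ) :
    x ⬝ᵥ (M *ᵥ x) = ∑ i, eig i * (w i ⬝ᵥ x)^2 ∧ x ⬝ᵥ x = ∑ i, (w i ⬝ᵥ x)^2 := by
  set c : Fin n → ℝ := fun i => w i ⬝ᵥ x with hc
  have hxe : x = ∑ i, c i • w i := hw2 x
  have hxw : ∀ i, x ⬝ᵥ w i = c i := fun i => dotProduct_comm _ _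
  have hMx : M *ᵥ x = ∑ i, (eig i * c i) • w i := by
    conv_lhs => rw [hxe]
    rw [mulVec_sum']
    refine Finset.sum_congr rfl fun i _ => ?_
    rw [mulVec_smul, hw1 i, smul_smul, mul_comm]
  constructor
  · rw [hMx, dot_sum_right]
    refine Finset.sum_congr rfl fun i _ => ?_
    rw [dotProduct_smul, smul_eq_mul, hxw i]; ring
  · conv_lhs => rw [show (x ⬝ᵥ x) = x ⬝ᵥ (∑ i, c i • w i) from by rw [← hxe]]
    rw [dot_sum_right]
    refine Finset.sum_congr rfl fun i _ => ?_
    rw [dotProduct_smul, smul_eq_mul, hxw i]; ring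

lemma rayleigh_lt (M : Matrix (Fin n) (Fin n) ℝ) (eig : Fin n → ℝ) (lam : ℝ)
    (w : Fin n → Fin n → ℝ)
    (hw1 : ∀ i, M *ᵥ w i = eig i • w i)
    (hw2 : ∀ x : Fin n → ℝ, x = ∑ i, (w i ⬝ᵥ x) • w i)
    (x : Fin n → ℝ) (hx : x ≠ 0)
    (hperp : ∀ i, lam ≤ eig i → w i ⬝ᵥ x = 0) :
    x ⬝ᵥ (M *ᵥ x) < lam * (x ⬝ᵥ x) := by
  obtain ⟨h1, h2⟩ := quad_form_eq M eig w hw1 hw2 x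
  have hex : ∃ i, w i ⬝ᵥ x ≠ 0 := by
    by_contra hall
    push_neg at hall
    apply hx
    rw [hw2 x]
    simp [hall]
  obtain ⟨i0, hi0⟩ := hex
  rw [h1, h2, Finset.mul_sum]
  refine Finset.sum_lt_sum (fun i _ => ?_) ⟨i0, Finset.mem_univ i0, ?_⟩
  · by_cases h : lam ≤ eig i
    · rw [hperp i h]; simp
    · exact mul_le_mul_of_nonneg_right (le_of_not_ge h) (sq_nonneg _)
  · have hlt : eig i0 < lam := by
      by_contra h
      exact hi0 (hperp i0 (le_of_not_gt h))
    have h3 : 0 < (w i0 ⬝ᵥ x)^2 := by positivity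
    exact mul_lt_mul_of_pos_right hlt h3

lemma rayleigh_le (M : Matrix (Fin n) (Fin n) ℝ) (eig : Fin n → ℝ) (lam : ℝ)
    (w : Fin n → Fin n → ℝ)
    (hw1 : ∀ i, M *ᵥ w i = eig i • w i)
    (hw2 : ∀ x : Fin n → ℝ, x = ∑ i, (w i ⬝ᵥ x) • w i)
    (x : Fin n → ℝ)
    (hperp : ∀ i, lam < eig i → w i ⬝ᵥ x = 0) :
    x ⬝ᵥ (M *ᵥ x) ≤ lam * (x ⬝ᵥ x) := by
  obtain ⟨h1, h2⟩ := quad_form_eq M eig w hw1 hw2 x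
  rw [h1, h2, Finset.mul_sum]
  refine Finset.sum_le_sum fun i _ => ?_
  by_cases h : lam < eig i
  · rw [hperp i h]; simp
  · exact mul_le_mul_of_nonneg_right (le_of_not_gt h) (sq_nonneg _)

lemma rayleigh_eq_eigen (M : Matrix (Fin n) (Fin n) ℝ) (eig : Fin n → ℝ) (lam : ℝ)
    (w : Fin n → Fin n → ℝ)
    (hw1 : ∀ i, M *ᵥ w i = eig i • w i)
    (hw2 : ∀ x : Fin n → ℝ, x = ∑ i, (w i ⬝ᵥ x) • w i)
    (x : Fin n → ℝ)
    (hperp : ∀ i, lam < eig i → w i ⬝ᵥ x = 0)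
    (heq : x ⬝ᵥ (M *ᵥ x) = lam * (x ⬝ᵥ x)) :
    M *ᵥ x = lam • x := by
  obtain ⟨h1, h2⟩ := quad_form_eq M eig w hw1 hw2 x
  have hz : ∑ i, (lam - eig i) * (w i ⬝ᵥ x)^2 = 0 := by
    have he : ∑ i, (lam - eig i) * (w i ⬝ᵥ x)^2
        = lam * (x ⬝ᵥ x) - x ⬝ᵥ (M *ᵥ x) := by
      rw [h1, h2, Finset.mul_sum, ← Finset.sum_sub_distrib]
      exact Finset.sum_congr rfl fun i _ => by ring
    rw [he, heq, sub_self]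
  have hnn : ∀ i ∈ Finset.univ, 0 ≤ (lam - eig i) * ((w i ⬝ᵥ x)^2) := by
    intro i _
    by_cases h : lam < eig i
    · rw [hperp i h]; simp
    · have := le_of_not_gt h
      have h0 : 0 ≤ lam - eig i := by linarith
      exact mul_nonneg h0 (sq_nonneg _)
  have hall := (Finset.sum_eq_zero_iff_of_nonneg hnn).mp hz
  have hcoef : ∀ i, eig i * (w i ⬝ᵥ x) = lam * (w i ⬝ᵥ x) := by
    intro i
    by_cases hc : w i ⬝ᵥ x = 0
    · rw [hc]; ring
    · have hz2 := hall i (Finset.mem_univ i)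
      have hsq : (w i ⬝ᵥ x)^2 ≠ 0 := pow_ne_zero _ hc
      have hle : lam - eig i = 0 := by
        rcases mul_eq_zero.mp hz2 with h | h
        · exact h
        · exact absurd h hsq
      have : eig i = lam := by linarith
      rw [this]
  set c : Fin n → ℝ := fun i => w i ⬝ᵥ x with hc
  have hxe : x = ∑ i, c i • w i := hw2 x
  have hMx : M *ᵥ x = ∑ i, (eig i * c i) • w i := by
    conv_lhs => rw [hxe]
    rw [mulVec_sum']
    refine Finset.sum_congr rfl fun i _ => ?_
    rw [mulVec_smul, hw1 i, smul_smul, mul_comm]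
  rw [hMx]
  conv_rhs => rw [hxe, Finset.smul_sum]
  refine Finset.sum_congr rfl fun i _ => ?_
  rw [smul_smul, hcoef i]

noncomputable def dotL (v : Fin n → ℝ) : (Fin n → ℝ) →ₗ[ℝ] ℝ where
  toFun x := v ⬝ᵥ x
  map_add' x y := dotProduct_add v x y
  map_smul' a x := by simp [dotProduct_smul, smul_eq_mul]

lemma exists_combo {ι κ : Type*} [Fintype ι] [Fintype κ] [DecidableEq ι]
    (h : Fintype.card κ < Fintype.card ι)
    (v : ι → (Fin n → ℝ)) (g : κ → (Fin n → ℝ)) :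
    ∃ c : ι → ℝ, c ≠ 0 ∧ ∀ j, g j ⬝ᵥ (∑ i, c i • v i) = 0 := by
  classical
  let vecL : (ι → ℝ) →ₗ[ℝ] (Fin n → ℝ) :=
    ∑ i : ι, (LinearMap.proj i : (ι → ℝ) →ₗ[ℝ] ℝ).smulRight (v i)
  have hvecL : ∀ c : ι → ℝ, vecL c = ∑ i, c i • v i := by
    intro c
    simp [vecL, LinearMap.sum_apply, LinearMap.smulRight_apply, LinearMap.proj_apply]
  let Φ : (ι → ℝ) →ₗ[ℝ] (κ → ℝ) := LinearMap.pi fun j => (dotL (g j)).comp vecL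
  by_contra hcon
  push_neg at hcon
  have hinj : Function.Injective Φ := by
    rw [← LinearMap.ker_eq_bot, LinearMap.ker_eq_bot']
    intro c hc
    by_contra hc0
    obtain ⟨j, hj⟩ := hcon c hc0
    apply hj
    have : Φ c j = 0 := by rw [hc]; rfl
    simpa [Φ, LinearMap.pi_apply, dotL, hvecL] using this
  have := LinearMap.finrank_le_finrank_of_injective hinj
  rw [Module.finrank_fintype_fun_eq_card, Module.finrank_fintype_fun_eq_card] at this
  omega

end SpectralAux

section GraphAux

lemma exists_adj_of_ne (G : SimpleGraph (Fin n)) (hG : G.Connected) {a b : Fin n}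
    (hab : a ≠ b) : ∃ cc, G.Adj a cc := by
  obtain ⟨p⟩ := hG.preconnected a b
  cases p with
  | nil => exact absurd rfl hab
  | cons h _ => exact ⟨_, h⟩

noncomputable def iv (u : Fin n → ℝ) (S : Set (Fin n)) : Fin n → ℝ := S.indicator u

lemma iv_mem (u : Fin n → ℝ) {S : Set (Fin n)} {i : Fin n} (h : i ∈ S) : iv u S i = u i :=
  Set.indicator_of_mem h u

lemma iv_not_mem (u : Fin n → ℝ) {S : Set (Fin n)} {i : Fin n} (h : i ∉ S) : iv u S i = 0 :=
  Set.indicator_of_notMem h u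

lemma iv_nonneg (u : Fin n → ℝ) {S : Set (Fin n)} (hS1 : ∀ i ∈ S, 0 ≤ u i) (i : Fin n) :
    0 ≤ iv u S i := by
  classical
  by_cases h : i ∈ S
  · rw [iv_mem u h]; exact hS1 i h
  · rw [iv_not_mem u h]

lemma modM_mulVec (G : SimpleGraph (Fin n)) [DecidableRel G.Adj] (x : Fin n → ℝ) :
    modM G *ᵥ x = G.adjMatrix ℝ *ᵥ x - ((volG G)⁻¹ * (degR G ⬝ᵥ x)) • degR G := by
  unfold modM
  rw [sub_mulVec]
  congr 1
  rw [smul_mulVec]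
  funext k
  simp only [Pi.smul_apply, mulVec, dotProduct, vecMulVec_apply, smul_eq_mul, Finset.mul_sum]
  rw [Finset.sum_mul]
  exact Finset.sum_congr rfl fun j _ => by ring

lemma dot_iv_self (u : Fin n → ℝ) (S : Set (Fin n)) :
    u ⬝ᵥ iv u S = iv u S ⬝ᵥ iv u S := by
  classical
  unfold dotProduct
  refine Finset.sum_congr rfl fun i _ => ?_
  by_cases h : i ∈ S
  · rw [iv_mem u h]
  · rw [iv_not_mem u h, mul_zero, mul_zero]

lemma dom_diff_eq (G : SimpleGraph (Fin n)) [DecidableRel G.Adj] (u : Fin n → ℝ)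
    (S : Set (Fin n)) :
    iv u S ⬝ᵥ (G.adjMatrix ℝ *ᵥ iv u S) - iv u S ⬝ᵥ (G.adjMatrix ℝ *ᵥ u)
      = ∑ i, ∑ j, iv u S i * (G.adjMatrix ℝ i j * (iv u S j - u j)) := by
  simp only [mulVec, dotProduct]
  rw [← Finset.sum_sub_distrib]
  refine Finset.sum_congr rfl fun i _ => ?_
  rw [← mul_sub, ← Finset.sum_sub_distrib, Finset.mul_sum]
  refine Finset.sum_congr rfl fun j _ => by ring

lemma dom_term_nonneg (G : SimpleGraph (Fin n)) [DecidableRel G.Adj] (u : Fin n → ℝ)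
    {S : Set (Fin n)} (hS1 : ∀ i ∈ S, 0 ≤ u i)
    (hS2 : ∀ i ∈ S, ∀ j, G.Adj i j → 0 < u j → j ∈ S) (i j : Fin n) :
    0 ≤ iv u S i * (G.adjMatrix ℝ i j * (iv u S j - u j)) := by
  classical
  by_cases hiS : i ∈ S
  · refine mul_nonneg (by rw [iv_mem u hiS]; exact hS1 i hiS) ?_
    by_cases hjS : j ∈ S
    · rw [iv_mem u hjS, sub_self, mul_zero]
    · rw [iv_not_mem u hjS, zero_sub]
      by_cases hadj : G.Adj i j
      · rw [SimpleGraph.adjMatrix_apply, if_pos hadj, one_mul, neg_nonneg]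
        by_contra hc
        push_neg at hc
        exact hjS (hS2 i hiS j hadj hc)
      · rw [SimpleGraph.adjMatrix_apply, if_neg hadj, zero_mul]
  · rw [iv_not_mem u hiS, zero_mul]

lemma dom_ineq (G : SimpleGraph (Fin n)) [DecidableRel G.Adj] (u : Fin n → ℝ)
    {S : Set (Fin n)} (hS1 : ∀ i ∈ S, 0 ≤ u i)
    (hS2 : ∀ i ∈ S, ∀ j, G.Adj i j → 0 < u j → j ∈ S) :
    iv u S ⬝ᵥ (G.adjMatrix ℝ *ᵥ u) ≤ iv u S ⬝ᵥ (G.adjMatrix ℝ *ᵥ iv u S) := by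
  have h := dom_diff_eq G u S
  have hnn : 0 ≤ ∑ i, ∑ j, iv u S i * (G.adjMatrix ℝ i j * (iv u S j - u j)) :=
    Finset.sum_nonneg fun i _ => Finset.sum_nonneg fun j _ => dom_term_nonneg G u hS1 hS2 i j
  linarith

lemma dom_eq_no_boundary (G : SimpleGraph (Fin n)) [DecidableRel G.Adj] (u : Fin n → ℝ)
    {S : Set (Fin n)} (hS1 : ∀ i ∈ S, 0 ≤ u i)
    (hS2 : ∀ i ∈ S, ∀ j, G.Adj i j → 0 < u j → j ∈ S)
    (heq : iv u S ⬝ᵥ (G.adjMatrix ℝ *ᵥ u) = iv u S ⬝ᵥ (G.adjMatrix ℝ *ᵥ iv u S)) :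
    ∀ i ∈ S, ∀ j, G.Adj i j → j ∉ S → u i * u j = 0 := by
  classical
  have h := dom_diff_eq G u S
  rw [heq, sub_self] at h
  have hall := (Finset.sum_eq_zero_iff_of_nonneg (fun i _ =>
    Finset.sum_nonneg fun j _ => dom_term_nonneg G u hS1 hS2 i j)).mp h.symm
  intro i hiS j hadj hjS
  have h2 := (Finset.sum_eq_zero_iff_of_nonneg (fun j _ =>
    dom_term_nonneg G u hS1 hS2 i j)).mp (hall i (Finset.mem_univ i)) j (Finset.mem_univ j)
  rw [iv_mem u hiS, iv_not_mem u hjS, SimpleGraph.adjMatrix_apply, if_pos hadj,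
    zero_sub, one_mul] at h2
  rcases mul_eq_zero.mp h2 with h | h
  · rw [h, zero_mul]
  · rw [show u j = 0 by linarith [neg_eq_zero.mp h], mul_zero]

lemma dom_eigen_identity (G : SimpleGraph (Fin n)) [DecidableRel G.Adj]
    (u : Fin n → ℝ) (lam : ℝ) (heig : modM G *ᵥ u = lam • u) (S : Set (Fin n)) :
    iv u S ⬝ᵥ (G.adjMatrix ℝ *ᵥ u)
      = lam * (iv u S ⬝ᵥ iv u S) + ((volG G)⁻¹ * (degR G ⬝ᵥ u)) * (degR G ⬝ᵥ iv u S) := by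
  have hA : G.adjMatrix ℝ *ᵥ u = lam • u + ((volG G)⁻¹ * (degR G ⬝ᵥ u)) • degR G := by
    have h := modM_mulVec G u
    rw [heig] at h
    rw [h, sub_add_cancel]
  rw [hA, dotProduct_add, dotProduct_smul, dotProduct_smul, smul_eq_mul, smul_eq_mul,
    dotProduct_comm (iv u S) u, dot_iv_self, dotProduct_comm (iv u S) (degR G)]

lemma dom_cross_dot (u : Fin n → ℝ) {S T : Set (Fin n)}
    (h : ∀ i ∈ S, i ∉ T) : iv u S ⬝ᵥ iv u T = 0 := by
  classical
  apply Finset.sum_eq_zero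
  intro i _
  by_cases hiS : i ∈ S
  · rw [iv_not_mem u (h i hiS), mul_zero]
  · rw [iv_not_mem u hiS, zero_mul]

lemma dom_cross_mulVec (G : SimpleGraph (Fin n)) [DecidableRel G.Adj] (u : Fin n → ℝ)
    {S T : Set (Fin n)} (h : ∀ i ∈ S, ∀ j ∈ T, ¬ G.Adj i j) :
    iv u S ⬝ᵥ (G.adjMatrix ℝ *ᵥ iv u T) = 0 := by
  classical
  simp only [dotProduct, mulVec]
  apply Finset.sum_eq_zero
  intro i _
  by_cases hiS : i ∈ S
  · rw [mul_eq_zero]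
    right
    apply Finset.sum_eq_zero
    intro j _
    by_cases hjT : j ∈ T
    · rw [SimpleGraph.adjMatrix_apply, if_neg (h i hiS j hjT), zero_mul]
    · rw [iv_not_mem u hjT, mul_zero]
  · rw [iv_not_mem u hiS, zero_mul]

lemma combo_dot_combo {ι : Type*} [Fintype ι] [DecidableEq ι]
    (c : ι → ℝ) (v : ι → Fin n → ℝ)
    (hcross : ∀ i j, i ≠ j → v i ⬝ᵥ v j = 0) :
    (∑ i, c i • v i) ⬝ᵥ (∑ i, c i • v i) = ∑ i, c i ^ 2 * (v i ⬝ᵥ v i) := by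
  rw [sum_dot_left]
  refine Finset.sum_congr rfl fun i _ => ?_
  rw [smul_dotProduct, dot_sum_right, smul_eq_mul]
  rw [Finset.sum_eq_single i]
  · rw [dotProduct_smul, smul_eq_mul]; ring
  · intro j _ hj
    rw [dotProduct_smul, hcross i j (fun h => hj (h ▸ rfl)), smul_zero]
  · intro h; exact absurd (Finset.mem_univ i) h

lemma combo_dot_mulVec_combo {ι : Type*} [Fintype ι] [DecidableEq ι]
    (A : Matrix (Fin n) (Fin n) ℝ) (c : ι → ℝ) (v : ι → Fin n → ℝ)
    (hcross : ∀ i j, i ≠ j → v i ⬝ᵥ (A *ᵥ v j) = 0) :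
    (∑ i, c i • v i) ⬝ᵥ (A *ᵥ ∑ i, c i • v i) = ∑ i, c i ^ 2 * (v i ⬝ᵥ (A *ᵥ v i)) := by
  rw [mulVec_sum', sum_dot_left]
  refine Finset.sum_congr rfl fun i _ => ?_
  rw [smul_dotProduct, dot_sum_right, smul_eq_mul]
  rw [Finset.sum_eq_single i]
  · rw [mulVec_smul, dotProduct_smul, smul_eq_mul]; ring
  · intro j _ hj
    rw [mulVec_smul, dotProduct_smul, hcross i j (fun h => hj (h ▸ rfl)), smul_zero]
  · intro h; exact absurd (Finset.mem_univ i) h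

end GraphAux

section DomainAux

lemma strong_closure (G : SimpleGraph (Fin n)) (u : Fin n → ℝ) {S : Set (Fin n)}
    (hS : IsPosStrongNodalDomain G u S) :
    ∀ i ∈ S, ∀ j, G.Adj i j → 0 < u j → j ∈ S := by
  intro i hiS j hadj hj
  obtain ⟨hsub, hconn, hmax⟩ := hS
  have hpair : (G.induce {i, j}).Connected := G.induce_pair_connected_of_adj hadj
  have hT : (G.induce (S ∪ {i, j})).Connected :=
    SimpleGraph.induce_union_connected hconn.preconnected hpair.preconnected ⟨i, hiS, by simp⟩
  have hsub2 : S ∪ {i, j} ⊆ {k | 0 < u k} := by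
    apply Set.union_subset hsub
    intro k hk
    rcases hk with hk | hk
    · rw [hk]; exact hsub hiS
    · rw [Set.mem_singleton_iff.mp hk]; exact hj
  have := hmax _ Set.subset_union_left hsub2 hT
  rw [← this]
  right; right; rfl

lemma weak_closure (G : SimpleGraph (Fin n)) (u : Fin n → ℝ) {S : Set (Fin n)}
    (hS : IsPosWeakNodalDomain G u S) :
    ∀ i ∈ S, ∀ j, G.Adj i j → 0 ≤ u j → j ∈ S := by
  intro i hiS j hadj hj
  obtain ⟨hsub, _, hconn, hmax⟩ := hS
  have hpair : (G.induce {i, j}).Connected := G.induce_pair_connected_of_adj hadj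
  have hT : (G.induce (S ∪ {i, j})).Connected :=
    SimpleGraph.induce_union_connected hconn.preconnected hpair.preconnected ⟨i, hiS, by simp⟩
  have hsub2 : S ∪ {i, j} ⊆ {k | 0 ≤ u k} := by
    apply Set.union_subset hsub
    intro k hk
    rcases hk with hk | hk
    · rw [hk]; exact hsub hiS
    · rw [Set.mem_singleton_iff.mp hk]; exact hj
  have := hmax _ Set.subset_union_left hsub2 hT
  rw [← this]
  right; right; rfl

lemma strong_cross (G : SimpleGraph (Fin n)) (u : Fin n → ℝ) {S T : Set (Fin n)}
    (hS : IsPosStrongNodalDomain G u S) (hT : IsPosStrongNodalDomain G u T)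
    (hne : S ≠ T) : ∀ i ∈ S, ∀ j ∈ T, i ≠ j ∧ ¬ G.Adj i j := by
  intro i hiS j hjT
  constructor
  · rintro rfl
    have hU : (G.induce (S ∪ T)).Connected :=
      SimpleGraph.induce_union_connected hS.2.1.preconnected hT.2.1.preconnected ⟨i, hiS, hjT⟩
    have h1 := hS.2.2 _ Set.subset_union_left (Set.union_subset hS.1 hT.1) hU
    have h2 := hT.2.2 _ Set.subset_union_right (Set.union_subset hS.1 hT.1) hU
    exact hne (h1.symm.trans h2)
  · intro hadj
    have hjS : j ∈ S := strong_closure G u hS i hiS j hadj (hT.1 hjT)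
    have hU : (G.induce (S ∪ T)).Connected :=
      SimpleGraph.induce_union_connected hS.2.1.preconnected hT.2.1.preconnected ⟨j, hjS, hjT⟩
    have h1 := hS.2.2 _ Set.subset_union_left (Set.union_subset hS.1 hT.1) hU
    have h2 := hT.2.2 _ Set.subset_union_right (Set.union_subset hS.1 hT.1) hU
    exact hne (h1.symm.trans h2)

lemma weak_cross (G : SimpleGraph (Fin n)) (u : Fin n → ℝ) {S T : Set (Fin n)}
    (hS : IsPosWeakNodalDomain G u S) (hT : IsPosWeakNodalDomain G u T)
    (hne : S ≠ T) : ∀ i ∈ S, ∀ j ∈ T, i ≠ j ∧ ¬ G.Adj i j := by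
  intro i hiS j hjT
  constructor
  · rintro rfl
    have hU : (G.induce (S ∪ T)).Connected :=
      SimpleGraph.induce_union_connected hS.2.2.1.preconnected hT.2.2.1.preconnected ⟨i, hiS, hjT⟩
    have h1 := hS.2.2.2 _ Set.subset_union_left (Set.union_subset hS.1 hT.1) hU
    have h2 := hT.2.2.2 _ Set.subset_union_right (Set.union_subset hS.1 hT.1) hU
    exact hne (h1.symm.trans h2)
  · intro hadj
    have hjS : j ∈ S := weak_closure G u hS i hiS j hadj (hT.1 hjT)
    have hU : (G.induce (S ∪ T)).Connected :=
      SimpleGraph.induce_union_connected hS.2.2.1.preconnected hT.2.2.1.preconnected ⟨j, hjS, hjT⟩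
    have h1 := hS.2.2.2 _ Set.subset_union_left (Set.union_subset hS.1 hT.1) hU
    have h2 := hT.2.2.2 _ Set.subset_union_right (Set.union_subset hS.1 hT.1) hU
    exact hne (h1.symm.trans h2)

lemma strong_witness (G : SimpleGraph (Fin n)) (u : Fin n → ℝ) {S : Set (Fin n)}
    (hS : IsPosStrongNodalDomain G u S) : ∃ i ∈ S, 0 < u i := by
  obtain ⟨⟨i, hi⟩⟩ := hS.2.1.nonempty
  exact ⟨i, hi, hS.1 hi⟩

lemma weak_witness (G : SimpleGraph (Fin n)) (u : Fin n → ℝ) {S : Set (Fin n)}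
    (hS : IsPosWeakNodalDomain G u S) : ∃ i ∈ S, 0 < u i := by
  obtain ⟨i, hi, hne⟩ := hS.2.1
  exact ⟨i, hi, lt_of_le_of_ne (hS.1 hi) (Ne.symm hne)⟩

end DomainAux

/-- Modularity nodal domain theorem: if `u` is an eigenvector of the modularity
matrix `M` for the eigenvalue `λ`, oriented so that `dᵀu ≥ 0`, and `u` has entries
of opposite signs, then `u` induces at most `ℓ+1` positive strong nodal domains and
at most `ℓ'+1` positive weak nodal domains, where `ℓ` (resp. `ℓ'`) is the number of
eigenvalues of `M` that are `≥ λ` (resp. `> λ`), with multiplicity. -/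
theorem modularity_nodal_domain_theorem (G : SimpleGraph (Fin n))
    [DecidableRel G.Adj] (hG : G.Connected) (hM : (modM G).IsHermitian)
    (lam : ℝ) (u : Fin n → ℝ) (hu : u ≠ 0)
    (heig : modM G *ᵥ u = lam • u)
    (hor : 0 ≤ degR G ⬝ᵥ u)
    (hpos : ∃ i, 0 < u i) (hneg : ∃ j, u j < 0) :
    {S : Set (Fin n) | IsPosStrongNodalDomain G u S}.ncard ≤
      (Finset.univ.filter (fun i => lam ≤ hM.eigenvalues i)).card + 1 ∧
    {S : Set (Fin n) | IsPosWeakNodalDomain G u S}.ncard ≤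
      (Finset.univ.filter (fun i => lam < hM.eigenvalues i)).card + 1 := by
  classical
  obtain ⟨w, hw1, hw2⟩ := herm_expansion (modM G) hM
  obtain ⟨ip, hip⟩ := hpos
  obtain ⟨jm, hjm⟩ := hneg
  have hne0 : ip ≠ jm := fun h => absurd (h ▸ hip) (not_lt.mpr (le_of_lt hjm))
  have hadj : ∀ v : Fin n, ∃ z, G.Adj v z := by
    intro v
    by_cases h : v = ip
    · exact exists_adj_of_ne G hG (h ▸ hne0)
    · exact exists_adj_of_ne G hG h
  have hdeg : ∀ v, 0 < degR G v := by
    intro v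
    have h1 : 0 < G.degree v := (G.degree_pos_iff_exists_adj v).mpr (hadj v)
    have : (0:ℝ) < (G.degree v : ℝ) := by exact_mod_cast h1
    exact this
  have hvol : 0 < volG G := Finset.sum_pos (fun i _ => hdeg i) ⟨ip, Finset.mem_univ ip⟩
  have hvolinv : 0 < (volG G)⁻¹ := inv_pos.mpr hvol
  constructor
  · -- strong nodal domains
    by_contra hcon
    push_neg at hcon
    set F : Finset (Fin n) := Finset.univ.filter (fun i => lam ≤ hM.eigenvalues i) with hF
    have hfin : {S : Set (Fin n) | IsPosStrongNodalDomain G u S}.Finite := Set.toFinite _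
    set D : Finset (Set (Fin n)) := hfin.toFinset with hD
    have hmemD : ∀ S : Set (Fin n), S ∈ D ↔ IsPosStrongNodalDomain G u S :=
      fun S => hfin.mem_toFinset
    have hcard : Fintype.card (↥F ⊕ Unit) < Fintype.card ↥D := by
      have hcs : Fintype.card (↥F ⊕ Unit) = F.card + 1 := by
        rw [Fintype.card_sum, Fintype.card_coe]; simp
      rw [hcs, Fintype.card_coe]
      have hnc : {S : Set (Fin n) | IsPosStrongNodalDomain G u S}.ncard = D.card :=
        Set.ncard_eq_toFinset_card _ hfin
      omega
    obtain ⟨c, hc0, hcperp⟩ := exists_combo hcard (fun S : ↥D => iv u ↑S)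
      (Sum.elim (fun i : ↥F => w ↑i) (fun _ : Unit => degR G))
    set x : Fin n → ℝ := ∑ S : ↥D, c S • iv u (↑S : Set (Fin n)) with hx
    have hxd : degR G ⬝ᵥ x = 0 := by simpa using hcperp (Sum.inr ())
    have hperp : ∀ i, lam ≤ hM.eigenvalues i → w i ⬝ᵥ x = 0 := by
      intro i hi
      simpa using hcperp (Sum.inl ⟨i, by simp [hF, hi]⟩)
    obtain ⟨S0, hcS0⟩ := Function.ne_iff.mp hc0
    have hS0 : IsPosStrongNodalDomain G u ↑S0 := (hmemD _).mp S0.2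
    obtain ⟨i0, hi0S, hi0pos⟩ := strong_witness G u hS0
    have hx_i0 : x i0 = c S0 * u i0 := by
      rw [hx, Finset.sum_apply, Finset.sum_eq_single S0]
      · rw [Pi.smul_apply, iv_mem u hi0S, smul_eq_mul]
      · intro T _ hTne
        have hTdom : IsPosStrongNodalDomain G u ↑T := (hmemD _).mp T.2
        rw [Pi.smul_apply, smul_eq_mul, mul_eq_zero]
        right
        apply iv_not_mem
        intro hi0T
        have hne : (↑T : Set (Fin n)) ≠ ↑S0 := fun h => hTne (Subtype.ext h)
        exact (strong_cross G u hTdom hS0 hne i0 hi0T i0 hi0S).1 rfl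
      · intro h; exact absurd (Finset.mem_univ S0) h
    have hxne : x ≠ 0 := by
      intro h
      have h0 : x i0 = 0 := by rw [h]; rfl
      rw [hx_i0] at h0
      rcases mul_eq_zero.mp h0 with h | h
      · exact hcS0 h
      · exact absurd h (ne_of_gt hi0pos)
    have hcross : ∀ S T : ↥D, S ≠ T →
        (∀ i ∈ (↑S : Set (Fin n)), ∀ j ∈ (↑T : Set (Fin n)), i ≠ j ∧ ¬ G.Adj i j) := by
      intro S T hne
      exact strong_cross G u ((hmemD _).mp S.2) ((hmemD _).mp T.2)
        (fun h => hne (Subtype.ext h))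
    have hxx : x ⬝ᵥ x = ∑ S : ↥D, c S ^ 2 * (iv u ↑S ⬝ᵥ iv u ↑S) := by
      rw [hx]
      apply combo_dot_combo
      intro S T hne
      exact dom_cross_dot u (fun i hiS hiT => ((hcross S T hne) i hiS i hiT).1 rfl)
    have hAx : x ⬝ᵥ (G.adjMatrix ℝ *ᵥ x)
        = ∑ S : ↥D, c S ^ 2 * (iv u ↑S ⬝ᵥ (G.adjMatrix ℝ *ᵥ iv u ↑S)) := by
      rw [hx]
      apply combo_dot_mulVec_combo
      intro S T hne
      exact dom_cross_mulVec G u (fun i hiS j hjT => ((hcross S T hne) i hiS j hjT).2)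
    have hMxAx : x ⬝ᵥ (modM G *ᵥ x) = x ⬝ᵥ (G.adjMatrix ℝ *ᵥ x) := by
      rw [modM_mulVec, hxd, mul_zero, zero_smul, sub_zero]
    have hdomineq : ∀ S : ↥D,
        lam * (iv u ↑S ⬝ᵥ iv u ↑S) ≤ iv u ↑S ⬝ᵥ (G.adjMatrix ℝ *ᵥ iv u ↑S) := by
      intro S
      have hdom := (hmemD _).mp S.2
      have h1 : ∀ i ∈ (↑S : Set (Fin n)), 0 ≤ u i := fun i hi => le_of_lt (hdom.1 hi)
      have h2 := strong_closure G u hdom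
      have hineq := dom_ineq G u h1 h2
      have hid := dom_eigen_identity G u lam heig ↑S
      have hdnn : 0 ≤ degR G ⬝ᵥ iv u ↑S :=
        Finset.sum_nonneg fun i _ => mul_nonneg (le_of_lt (hdeg i)) (iv_nonneg u h1 i)
      have hnn2 : 0 ≤ (volG G)⁻¹ * (degR G ⬝ᵥ u) * (degR G ⬝ᵥ iv u ↑S) :=
        mul_nonneg (mul_nonneg (le_of_lt hvolinv) hor) hdnn
      linarith
    have hlt := rayleigh_lt (modM G) hM.eigenvalues lam w hw1 hw2 x hxne hperp
    have hge : lam * (x ⬝ᵥ x) ≤ x ⬝ᵥ (modM G *ᵥ x) := by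
      rw [hMxAx, hAx, hxx, Finset.mul_sum]
      apply Finset.sum_le_sum
      intro S _
      have h := hdomineq S
      nlinarith [sq_nonneg (c S)]
    linarith
  · -- weak nodal domains
    by_contra hcon
    push_neg at hcon
    set F : Finset (Fin n) := Finset.univ.filter (fun i => lam < hM.eigenvalues i) with hF
    have hfin : {S : Set (Fin n) | IsPosWeakNodalDomain G u S}.Finite := Set.toFinite _
    set D : Finset (Set (Fin n)) := hfin.toFinset with hD
    have hmemD : ∀ S : Set (Fin n), S ∈ D ↔ IsPosWeakNodalDomain G u S :=
      fun S => hfin.mem_toFinset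
    have hcard : Fintype.card (↥F ⊕ Unit) < Fintype.card ↥D := by
      have hcs : Fintype.card (↥F ⊕ Unit) = F.card + 1 := by
        rw [Fintype.card_sum, Fintype.card_coe]; simp
      rw [hcs, Fintype.card_coe]
      have hnc : {S : Set (Fin n) | IsPosWeakNodalDomain G u S}.ncard = D.card :=
        Set.ncard_eq_toFinset_card _ hfin
      omega
    obtain ⟨c, hc0, hcperp⟩ := exists_combo hcard (fun S : ↥D => iv u ↑S)
      (Sum.elim (fun i : ↥F => w ↑i) (fun _ : Unit => degR G))
    set x : Fin n → ℝ := ∑ S : ↥D, c S • iv u (↑S : Set (Fin n)) with hx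
    have hxd : degR G ⬝ᵥ x = 0 := by simpa using hcperp (Sum.inr ())
    have hperp : ∀ i, lam < hM.eigenvalues i → w i ⬝ᵥ x = 0 := by
      intro i hi
      simpa using hcperp (Sum.inl ⟨i, by simp [hF, hi]⟩)
    obtain ⟨S0, hcS0⟩ := Function.ne_iff.mp hc0
    have hS0 : IsPosWeakNodalDomain G u ↑S0 := (hmemD _).mp S0.2
    obtain ⟨i0, hi0S, hi0pos⟩ := weak_witness G u hS0
    have hfam1 : ∀ S : ↥D, ∀ i ∈ (↑S : Set (Fin n)), 0 ≤ u i :=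
      fun S i hi => ((hmemD _).mp S.2).1 hi
    have hcross : ∀ S T : ↥D, S ≠ T →
        (∀ i ∈ (↑S : Set (Fin n)), ∀ j ∈ (↑T : Set (Fin n)), i ≠ j ∧ ¬ G.Adj i j) := by
      intro S T hne
      exact weak_cross G u ((hmemD _).mp S.2) ((hmemD _).mp T.2)
        (fun h => hne (Subtype.ext h))
    have hxx : x ⬝ᵥ x = ∑ S : ↥D, c S ^ 2 * (iv u ↑S ⬝ᵥ iv u ↑S) := by
      rw [hx]
      apply combo_dot_combo
      intro S T hne
      exact dom_cross_dot u (fun i hiS hiT => ((hcross S T hne) i hiS i hiT).1 rfl)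
    have hAx : x ⬝ᵥ (G.adjMatrix ℝ *ᵥ x)
        = ∑ S : ↥D, c S ^ 2 * (iv u ↑S ⬝ᵥ (G.adjMatrix ℝ *ᵥ iv u ↑S)) := by
      rw [hx]
      apply combo_dot_mulVec_combo
      intro S T hne
      exact dom_cross_mulVec G u (fun i hiS j hjT => ((hcross S T hne) i hiS j hjT).2)
    have hMxAx : x ⬝ᵥ (modM G *ᵥ x) = x ⬝ᵥ (G.adjMatrix ℝ *ᵥ x) := by
      rw [modM_mulVec, hxd, mul_zero, zero_smul, sub_zero]
    -- per-domain inequality pieces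
    have hdomid : ∀ S : ↥D, iv u ↑S ⬝ᵥ (G.adjMatrix ℝ *ᵥ u)
        = lam * (iv u ↑S ⬝ᵥ iv u ↑S)
          + ((volG G)⁻¹ * (degR G ⬝ᵥ u)) * (degR G ⬝ᵥ iv u ↑S) :=
      fun S => dom_eigen_identity G u lam heig ↑S
    have hdomineq : ∀ S : ↥D, iv u ↑S ⬝ᵥ (G.adjMatrix ℝ *ᵥ u)
        ≤ iv u ↑S ⬝ᵥ (G.adjMatrix ℝ *ᵥ iv u ↑S) := by
      intro S
      exact dom_ineq G u (hfam1 S) (fun i hi j hj hjpos =>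
        weak_closure G u ((hmemD _).mp S.2) i hi j hj (le_of_lt hjpos))
    have hdnn : ∀ S : ↥D, 0 ≤ degR G ⬝ᵥ iv u ↑S := fun S =>
      Finset.sum_nonneg fun i _ => mul_nonneg (le_of_lt (hdeg i)) (iv_nonneg u (hfam1 S) i)
    -- the slack per domain is nonnegative
    have hslack : ∀ S : ↥D, 0 ≤ iv u ↑S ⬝ᵥ (G.adjMatrix ℝ *ᵥ iv u ↑S)
        - lam * (iv u ↑S ⬝ᵥ iv u ↑S) := by
      intro S
      have h1 := hdomid S
      have h2 := hdomineq S
      have h3 := hdnn S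
      nlinarith [mul_nonneg (mul_nonneg (le_of_lt hvolinv) hor) (hdnn S)]
    have hle := rayleigh_le (modM G) hM.eigenvalues lam w hw1 hw2 x hperp
    -- sum of nonnegative slacks is ≤ 0, hence all slack terms vanish
    have hsum : ∑ S : ↥D, c S ^ 2 * (iv u ↑S ⬝ᵥ (G.adjMatrix ℝ *ᵥ iv u ↑S)
        - lam * (iv u ↑S ⬝ᵥ iv u ↑S)) ≤ 0 := by
      have e1 : ∑ S : ↥D, c S ^ 2 * (iv u ↑S ⬝ᵥ (G.adjMatrix ℝ *ᵥ iv u ↑S)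
          - lam * (iv u ↑S ⬝ᵥ iv u ↑S))
          = x ⬝ᵥ (modM G *ᵥ x) - lam * (x ⬝ᵥ x) := by
        rw [hMxAx, hAx, hxx, Finset.mul_sum, ← Finset.sum_sub_distrib]
        exact Finset.sum_congr rfl fun S _ => by ring
      rw [e1]
      linarith
    have hterm0 : ∀ S : ↥D, c S ^ 2 * (iv u ↑S ⬝ᵥ (G.adjMatrix ℝ *ᵥ iv u ↑S)
        - lam * (iv u ↑S ⬝ᵥ iv u ↑S)) = 0 := by
      have hnn : ∀ S ∈ (Finset.univ : Finset ↥D),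
          0 ≤ c S ^ 2 * (iv u ↑S ⬝ᵥ (G.adjMatrix ℝ *ᵥ iv u ↑S)
            - lam * (iv u ↑S ⬝ᵥ iv u ↑S)) :=
        fun S _ => mul_nonneg (sq_nonneg _) (hslack S)
      have := le_antisymm hsum (Finset.sum_nonneg hnn)
      intro S
      exact (Finset.sum_eq_zero_iff_of_nonneg hnn).mp this S (Finset.mem_univ S)
    -- at S0 the slack vanishes, giving dᵀu = 0 and no boundary
    have hS0slack : iv u ↑S0 ⬝ᵥ (G.adjMatrix ℝ *ᵥ iv u ↑S0)
        - lam * (iv u ↑S0 ⬝ᵥ iv u ↑S0) = 0 := by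
      have h := hterm0 S0
      rcases mul_eq_zero.mp h with h | h
      · exact absurd (pow_eq_zero_iff (by norm_num)|>.mp h) hcS0
      · exact h
    have hdS0pos : 0 < degR G ⬝ᵥ iv u ↑S0 := by
      have hle0 : degR G i0 * iv u ↑S0 i0 ≤ degR G ⬝ᵥ iv u ↑S0 :=
        Finset.single_le_sum (f := fun i => degR G i * iv u ↑S0 i)
          (fun i _ => mul_nonneg (le_of_lt (hdeg i)) (iv_nonneg u (hfam1 S0) i))
          (Finset.mem_univ i0)
      have : 0 < degR G i0 * iv u ↑S0 i0 := by
        rw [iv_mem u hi0S]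
        exact mul_pos (hdeg i0) hi0pos
      linarith
    have hdu0 : degR G ⬝ᵥ u = 0 := by
      by_contra hduc
      have hdupos : 0 < degR G ⬝ᵥ u := lt_of_le_of_ne hor (Ne.symm hduc)
      have h1 := hdomid S0
      have h2 := hdomineq S0
      nlinarith [mul_pos (mul_pos hvolinv hdupos) hdS0pos]
    have hS0eq : iv u ↑S0 ⬝ᵥ (G.adjMatrix ℝ *ᵥ u)
        = iv u ↑S0 ⬝ᵥ (G.adjMatrix ℝ *ᵥ iv u ↑S0) := by
      have h1 := hdomid S0
      rw [hdu0, mul_zero, zero_mul, add_zero] at h1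
      linarith [hS0slack]
    have hS0closure : ∀ i ∈ (↑S0 : Set (Fin n)), ∀ j, G.Adj i j → 0 < u j →
        j ∈ (↑S0 : Set (Fin n)) :=
      fun i hi j hj hjpos => weak_closure G u hS0 i hi j hj (le_of_lt hjpos)
    have hbnd := dom_eq_no_boundary G u (hfam1 S0) hS0closure hS0eq
    -- equality in Rayleigh, so x is a lam-eigenvector
    have heqR : x ⬝ᵥ (modM G *ᵥ x) = lam * (x ⬝ᵥ x) := by
      have e1 : ∑ S : ↥D, c S ^ 2 * (iv u ↑S ⬝ᵥ (G.adjMatrix ℝ *ᵥ iv u ↑S)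
          - lam * (iv u ↑S ⬝ᵥ iv u ↑S))
          = x ⬝ᵥ (modM G *ᵥ x) - lam * (x ⬝ᵥ x) := by
        rw [hMxAx, hAx, hxx, Finset.mul_sum, ← Finset.sum_sub_distrib]
        exact Finset.sum_congr rfl fun S _ => by ring
      have e2 : ∑ S : ↥D, c S ^ 2 * (iv u ↑S ⬝ᵥ (G.adjMatrix ℝ *ᵥ iv u ↑S)
          - lam * (iv u ↑S ⬝ᵥ iv u ↑S)) = 0 :=
        Finset.sum_eq_zero fun S _ => hterm0 S
      rw [e2] at e1
      linarith
    have hMx := rayleigh_eq_eigen (modM G) hM.eigenvalues lam w hw1 hw2 x hperp heqR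
    -- x vanishes where u ≤ 0
    have hxz : ∀ z, u z ≤ 0 → x z = 0 := by
      intro z hz
      rw [hx, Finset.sum_apply]
      apply Finset.sum_eq_zero
      intro T _
      rw [Pi.smul_apply, smul_eq_mul, mul_eq_zero]
      right
      by_cases hzT : z ∈ (↑T : Set (Fin n))
      · rw [iv_mem u hzT]
        exact le_antisymm hz (hfam1 T z hzT)
      · exact iv_not_mem u hzT
    -- A *ᵥ x vanishes at zeros of u
    have hAxz : ∀ z, u z = 0 → (G.adjMatrix ℝ *ᵥ x) z = 0 := by
      intro z hz
      have h1 : (modM G *ᵥ x) z = lam * x z := by rw [hMx]; rfl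
      have h2 : x z = 0 := hxz z (le_of_eq hz)
      have h3 := modM_mulVec G x
      have h4 : (modM G *ᵥ x) z
          = (G.adjMatrix ℝ *ᵥ x) z - ((volG G)⁻¹ * (degR G ⬝ᵥ x)) * degR G z := by
        rw [h3]; rfl
      rw [hxd, mul_zero, zero_mul, sub_zero] at h4
      rw [h1, h2, mul_zero] at h4
      exact h4.symm
    -- Claim A: S0 contains no zero of u
    have hS0pos : ∀ z ∈ (↑S0 : Set (Fin n)), 0 < u z := by
      by_contra hcz
      push_neg at hcz
      obtain ⟨z, hzS, hznp⟩ := hcz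
      have hz0 : u z = 0 := le_antisymm hznp (hfam1 S0 z hzS)
      -- find a boundary dart inside the induced graph on S0
      have hconn : (G.induce (↑S0 : Set (Fin n))).Connected := hS0.2.2.1
      obtain ⟨pw⟩ := hconn.preconnected ⟨z, hzS⟩ ⟨i0, hi0S⟩
      have hzT : (⟨z, hzS⟩ : ↥(↑S0 : Set (Fin n)))
          ∈ {v : ↥(↑S0 : Set (Fin n)) | ¬ 0 < u ↑v} := by
        simp [hz0]
      have hi0T : (⟨i0, hi0S⟩ : ↥(↑S0 : Set (Fin n)))
          ∉ {v : ↥(↑S0 : Set (Fin n)) | ¬ 0 < u ↑v} := by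
        simp [hi0pos]
      obtain ⟨dt, _, hdt1, hdt2⟩ := pw.exists_boundary_dart _ hzT hi0T
      have hadjzp : G.Adj ↑dt.fst ↑dt.snd := dt.adj
      have hz'0 : u ↑dt.fst = 0 :=
        le_antisymm (not_lt.mp hdt1) (hfam1 S0 _ dt.fst.2)
      have hppos : 0 < u ↑dt.snd := not_not.mp hdt2
      -- compute (A *ᵥ x) at dt.fst
      have hAx0 := hAxz ↑dt.fst hz'0
      have hterm : ∀ j, G.adjMatrix ℝ (↑dt.fst) j * x j
          = c S0 * (G.adjMatrix ℝ (↑dt.fst) j * iv u ↑S0 j) := by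
        intro j
        by_cases hadjj : G.Adj ↑dt.fst j
        · by_cases hjpos : 0 < u j
          · have hjS0 : j ∈ (↑S0 : Set (Fin n)) :=
              hS0closure _ dt.fst.2 j hadjj hjpos
            have hxj : x j = c S0 * u j := by
              rw [hx, Finset.sum_apply, Finset.sum_eq_single S0]
              · rw [Pi.smul_apply, iv_mem u hjS0, smul_eq_mul]
              · intro T _ hTne
                rw [Pi.smul_apply, smul_eq_mul, mul_eq_zero]
                right
                apply iv_not_mem
                intro hjT
                have hne : (↑T : Set (Fin n)) ≠ ↑S0 := fun h => hTne (Subtype.ext h)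
                exact ((hcross T S0 (fun h => hTne h)) j hjT j hjS0).1 rfl
              · intro h; exact absurd (Finset.mem_univ S0) h
            rw [hxj, iv_mem u hjS0]; ring
          · have hxj : x j = 0 := hxz j (not_lt.mp hjpos)
            have hivj : iv u ↑S0 j = 0 := by
              by_cases hjS0 : j ∈ (↑S0 : Set (Fin n))
              · rw [iv_mem u hjS0]
                exact le_antisymm (not_lt.mp hjpos) (hfam1 S0 j hjS0)
              · exact iv_not_mem u hjS0
            rw [hxj, hivj]; ring
        · simp [SimpleGraph.adjMatrix_apply, hadjj]
      have hAxeq : (G.adjMatrix ℝ *ᵥ x) ↑dt.fst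
          = c S0 * ((G.adjMatrix ℝ *ᵥ iv u ↑S0) ↑dt.fst) := by
        simp only [mulVec, dotProduct, Finset.mul_sum]
        exact Finset.sum_congr rfl fun j _ => hterm j
      have hposA : 0 < (G.adjMatrix ℝ *ᵥ iv u ↑S0) ↑dt.fst := by
        have hle0 : G.adjMatrix ℝ (↑dt.fst) (↑dt.snd) * iv u ↑S0 (↑dt.snd)
            ≤ (G.adjMatrix ℝ *ᵥ iv u ↑S0) ↑dt.fst := by
          simp only [mulVec, dotProduct]
          exact Finset.single_le_sum (f := fun j => G.adjMatrix ℝ (↑dt.fst) j * iv u ↑S0 j)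
            (fun j _ => mul_nonneg (by rw [SimpleGraph.adjMatrix_apply]; positivity)
              (iv_nonneg u (hfam1 S0) j))
            (Finset.mem_univ (dt.snd : Fin n))
        have : 0 < G.adjMatrix ℝ (↑dt.fst) (↑dt.snd) * iv u ↑S0 (↑dt.snd) := by
          rw [SimpleGraph.adjMatrix_apply, if_pos hadjzp, one_mul, iv_mem u dt.snd.2]
          exact hppos
        linarith
      rw [hAxeq] at hAx0
      rcases mul_eq_zero.mp hAx0 with h | h
      · exact hcS0 h
      · exact absurd h (ne_of_gt hposA)
    -- exit edge from S0 leads to contradiction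
    have hjmS0 : jm ∉ (↑S0 : Set (Fin n)) := fun h => absurd (hfam1 S0 jm h) (not_le.mpr hjm)
    obtain ⟨pw⟩ := hG.preconnected i0 jm
    obtain ⟨dt, _, hdt1, hdt2⟩ := pw.exists_boundary_dart (↑S0 : Set (Fin n)) hi0S hjmS0
    have hb := hbnd dt.fst hdt1 dt.snd dt.adj hdt2
    rcases lt_trichotomy (u dt.snd) 0 with h | h | h
    · have h1 : 0 < u dt.fst := hS0pos _ hdt1
      nlinarith
    · exact hdt2 (weak_closure G u hS0 dt.fst hdt1 dt.snd dt.adj (le_of_eq h.symm))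
    · exact hdt2 (hS0closure dt.fst hdt1 dt.snd dt.adj h)
end

section
/- Let G be a finite simple connected graph and let S_1, …, S_k (k ≥ 1) be pairwise disjoint subsets of V such that vol S_i ≤ (1/2) vol G and 2|E(S_i)| > |∂S_i| for every i. Then Q(S_i) > 0 for every i, and the modularity matrix M has at least k−1 positive eigenvalues (counted with multiplicity). -/
open Matrix Finset

variable {n : ℕ}

/-- `∂S`: the set of edges with exactly one endpoint in `S`. -/
def boundaryEdges (G : SimpleGraph (Fin n)) [DecidableRel G.Adj] (S : Finset (Fin n)) :
    Finset (Sym2 (Fin n)) :=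
  G.edgeFinset.filter (fun e => (∃ v ∈ e, v ∈ S) ∧ (∃ v ∈ e, v ∉ S))

lemma card_interior_pairs (G : SimpleGraph (Fin n)) [DecidableRel G.Adj] (S : Finset (Fin n)) :
    ((S ×ˢ S).filter fun p => G.Adj p.1 p.2).card = 2 * (interiorEdges G S).card := by
  have h1 : ∀ p ∈ (S ×ˢ S).filter fun p : Fin n × Fin n => G.Adj p.1 p.2,
      Sym2.mk p.1 p.2 ∈ interiorEdges G S := by
    rintro ⟨a, b⟩ hp
    simp only [Finset.mem_filter, Finset.mem_product] at hp
    simp only [interiorEdges, Finset.mem_filter, SimpleGraph.mem_edgeFinset,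
      SimpleGraph.mem_edgeSet, Sym2.mem_iff]
    exact ⟨hp.2, by rintro v (rfl | rfl) <;> tauto⟩
  rw [Finset.card_eq_sum_card_fiberwise h1]
  rw [Finset.sum_congr rfl (fun e he => ?_), Finset.sum_const, smul_eq_mul, mul_comm]
  revert he
  refine Sym2.ind (fun a b he => ?_) e
  simp only [interiorEdges, Finset.mem_filter, SimpleGraph.mem_edgeFinset,
    SimpleGraph.mem_edgeSet, Sym2.mem_iff] at he
  obtain ⟨hab, hS⟩ := he
  have haS : a ∈ S := hS a (Or.inl rfl)
  have hbS : b ∈ S := hS b (Or.inr rfl)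
  have hne : a ≠ b := hab.ne
  have hfib : (((S ×ˢ S).filter fun p : Fin n × Fin n => G.Adj p.1 p.2).filter
      (fun p => Sym2.mk p.1 p.2 = s(a, b))) = {(a, b), (b, a)} := by
    ext ⟨u, v⟩
    simp only [Finset.mem_filter, Finset.mem_product, Finset.mem_insert, Finset.mem_singleton,
      Sym2.eq_iff, Prod.mk.injEq]
    constructor
    · rintro ⟨-, (⟨rfl, rfl⟩ | ⟨rfl, rfl⟩)⟩ <;> tauto
    · rintro (⟨rfl, rfl⟩ | ⟨rfl, rfl⟩)
      · exact ⟨⟨⟨haS, hbS⟩, hab⟩, by simp⟩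
      · exact ⟨⟨⟨hbS, haS⟩, hab.symm⟩, by simp⟩
  rw [hfib, Finset.card_insert_of_notMem (by simp [hne]), Finset.card_singleton]

lemma card_boundary_pairs (G : SimpleGraph (Fin n)) [DecidableRel G.Adj] (S : Finset (Fin n)) :
    ((S ×ˢ Sᶜ).filter fun p => G.Adj p.1 p.2).card = (boundaryEdges G S).card := by
  apply Finset.card_bij (fun p _ => Sym2.mk p.1 p.2)
  · rintro ⟨a, b⟩ hp
    simp only [Finset.mem_filter, Finset.mem_product, Finset.mem_compl] at hp
    simp only [boundaryEdges, Finset.mem_filter, SimpleGraph.mem_edgeFinset,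
      SimpleGraph.mem_edgeSet, Sym2.mem_iff]
    exact ⟨hp.2, ⟨a, Or.inl rfl, hp.1.1⟩, ⟨b, Or.inr rfl, hp.1.2⟩⟩
  · rintro ⟨a, b⟩ ha ⟨c, d⟩ hc h
    simp only [Finset.mem_filter, Finset.mem_product, Finset.mem_compl] at ha hc
    rw [Sym2.eq_iff] at h
    rcases h with ⟨rfl, rfl⟩ | ⟨rfl, rfl⟩
    · rfl
    · exact absurd ha.1.1 hc.1.2
  · intro e he
    simp only [boundaryEdges, Finset.mem_filter, SimpleGraph.mem_edgeFinset] at he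
    obtain ⟨hadj, ⟨u, hu, huS⟩, ⟨v, hv, hvS⟩⟩ := he
    revert hadj hu hv
    refine Sym2.ind (fun a b hadj hu hv => ?_) e
    rw [SimpleGraph.mem_edgeSet] at hadj
    rw [Sym2.mem_iff] at hu hv
    rcases hu with rfl | rfl
    · have hb : b ∉ S := by rcases hv with rfl | rfl <;> tauto
      exact ⟨(u, b), by simp [Finset.mem_filter, Finset.mem_product, huS, hb, hadj], rfl⟩
    · have ha : a ∉ S := by rcases hv with rfl | rfl <;> tauto
      exact ⟨(u, a), by simp [Finset.mem_filter, Finset.mem_product, huS, ha, hadj.symm],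
        Sym2.eq_swap⟩

lemma sum_sum_interior (G : SimpleGraph (Fin n)) [DecidableRel G.Adj] (S : Finset (Fin n)) :
    ∑ u ∈ S, ∑ v ∈ S, G.adjMatrix ℝ u v = 2 * ((interiorEdges G S).card : ℝ) := by
  have h : ∑ u ∈ S, ∑ v ∈ S, G.adjMatrix ℝ u v
      = (((S ×ˢ S).filter fun p : Fin n × Fin n => G.Adj p.1 p.2).card : ℝ) := by
    rw [← Finset.sum_product' (f := fun u v => G.adjMatrix ℝ u v)]
    simp [SimpleGraph.adjMatrix_apply, Finset.sum_boole]
  rw [h, card_interior_pairs]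
  push_cast
  ring

lemma sum_sum_boundary (G : SimpleGraph (Fin n)) [DecidableRel G.Adj] (S : Finset (Fin n)) :
    ∑ u ∈ S, ∑ v ∈ Sᶜ, G.adjMatrix ℝ u v = ((boundaryEdges G S).card : ℝ) := by
  have h : ∑ u ∈ S, ∑ v ∈ Sᶜ, G.adjMatrix ℝ u v
      = (((S ×ˢ Sᶜ).filter fun p : Fin n × Fin n => G.Adj p.1 p.2).card : ℝ) := by
    rw [← Finset.sum_product' (f := fun u v => G.adjMatrix ℝ u v)]
    simp [SimpleGraph.adjMatrix_apply, Finset.sum_boole]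
  rw [h, card_boundary_pairs]

lemma degR_eq_sum_row (G : SimpleGraph (Fin n)) [DecidableRel G.Adj] (u : Fin n) :
    degR G u = ∑ v, G.adjMatrix ℝ u v := by
  simp [degR, SimpleGraph.degree, SimpleGraph.neighborFinset_eq_filter,
    SimpleGraph.adjMatrix_apply, Finset.sum_boole]

lemma volS_eq (G : SimpleGraph (Fin n)) [DecidableRel G.Adj] (S : Finset (Fin n)) :
    volS G S = 2 * ((interiorEdges G S).card : ℝ) + ((boundaryEdges G S).card : ℝ) := by
  have h1 : ∀ u ∈ S, degR G u = ∑ v ∈ S, G.adjMatrix ℝ u v + ∑ v ∈ Sᶜ, G.adjMatrix ℝ u v :=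
    fun u _ => by rw [Finset.sum_add_sum_compl, ← degR_eq_sum_row]
  rw [volS, Finset.sum_congr rfl h1, Finset.sum_add_distrib, sum_sum_interior, sum_sum_boundary]

lemma Qedge_pos (G : SimpleGraph (Fin n)) [DecidableRel G.Adj] (S : Finset (Fin n))
    (hvolG : 0 ≤ volG G) (hvol : volS G S ≤ volG G / 2)
    (he : ((boundaryEdges G S).card : ℝ) < 2 * ((interiorEdges G S).card : ℝ)) :
    0 < Qedge G S := by
  have hv := volS_eq G S
  have hS0 : 0 ≤ volS G S := Finset.sum_nonneg fun i _ => Nat.cast_nonneg _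
  have hb0 : (0:ℝ) ≤ ((boundaryEdges G S).card : ℝ) := Nat.cast_nonneg _
  rw [Qedge]
  rcases eq_or_lt_of_le hvolG with h0 | h0
  · have hvs : volS G S ^ 2 / volG G = 0 := by rw [← h0, div_zero]
    rw [hvs]
    linarith
  · have hdiv : volS G S ^ 2 / volG G ≤ volS G S / 2 := by
      rw [div_le_iff₀ h0]
      nlinarith
    linarith

lemma quad_form_pos (G : SimpleGraph (Fin n)) [DecidableRel G.Adj] {k : ℕ}
    (S : Fin k → Finset (Fin n))
    (hdisj : ∀ i j, i ≠ j → Disjoint (S i) (S j))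
    (hedge : ∀ i, ((boundaryEdges G (S i)).card : ℝ) < 2 * ((interiorEdges G (S i)).card : ℝ))
    (c : Fin k → ℝ) (hc : c ≠ 0) (x : Fin n → ℝ)
    (hxdef : ∀ u, x u = ∑ i, c i * (if u ∈ S i then (1:ℝ) else 0)) :
    0 < x ⬝ᵥ (G.adjMatrix ℝ *ᵥ x) := by
  classical
  set A := G.adjMatrix ℝ with hA
  have hAnn : ∀ u v, 0 ≤ A u v := by
    intro u v; rw [hA, SimpleGraph.adjMatrix_apply]; split <;> norm_num
  have hAsymm : ∀ u v, A u v = A v u := by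
    intro u v; simp [hA, SimpleGraph.adjMatrix_apply, SimpleGraph.adj_comm]
  set B : Fin k → Fin k → ℝ := fun i j => ∑ u ∈ S i, ∑ v ∈ S j, A u v with hB
  have hBdef : ∀ i j, B i j = ∑ u ∈ S i, ∑ v ∈ S j, A u v := fun i j => rfl
  have hBnn : ∀ i j, 0 ≤ B i j := fun i j =>
    Finset.sum_nonneg fun u _ => Finset.sum_nonneg fun v _ => hAnn u v
  have hBsymm : ∀ i j, B i j = B j i := by
    intro i j
    rw [hBdef, hBdef, Finset.sum_comm (f := fun u v => A u v)]
    exact Finset.sum_congr rfl fun v _ => Finset.sum_congr rfl fun u _ => hAsymm u v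
  have e3 : ∀ i j : Fin k, (∑ u, ∑ v, ((if u ∈ S i then (1:ℝ) else 0)
      * if v ∈ S j then (1:ℝ) else 0) * (c i * c j * A u v)) = c i * c j * B i j := by
    intro i j
    rw [hBdef]
    calc (∑ u, ∑ v, ((if u ∈ S i then (1:ℝ) else 0) * if v ∈ S j then (1:ℝ) else 0)
          * (c i * c j * A u v))
        = ∑ u, (if u ∈ S i then (∑ v, if v ∈ S j then c i * c j * A u v else 0) else 0) := by
          refine Finset.sum_congr rfl fun u _ => ?_
          split_ifs with hu
          · refine Finset.sum_congr rfl fun v _ => by split_ifs with hv <;> simp [hu, hv]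
          · exact Finset.sum_eq_zero fun v _ => by simp [hu]
      _ = ∑ u ∈ univ ∩ S i, ∑ v ∈ univ ∩ S j, c i * c j * A u v := by
          rw [Finset.sum_ite_mem]
          exact Finset.sum_congr rfl fun u _ => by rw [Finset.sum_ite_mem]
      _ = c i * c j * ∑ u ∈ S i, ∑ v ∈ S j, A u v := by
          simp only [Finset.univ_inter]
          rw [Finset.mul_sum]
          exact Finset.sum_congr rfl fun u _ => by rw [Finset.mul_sum]
  -- expansion
  have hexp : x ⬝ᵥ (A *ᵥ x) = ∑ i, ∑ j, c i * c j * B i j := by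
    have e2 : ∀ u v, x u * x v * A u v
        = ∑ i, ∑ j, ((if u ∈ S i then (1:ℝ) else 0) * if v ∈ S j then (1:ℝ) else 0)
          * (c i * c j * A u v) := by
      intro u v
      rw [hxdef u, hxdef v, Finset.sum_mul_sum, Finset.sum_mul]
      refine Finset.sum_congr rfl fun i _ => ?_
      rw [Finset.sum_mul]
      exact Finset.sum_congr rfl fun j _ => by ring
    calc x ⬝ᵥ (A *ᵥ x) = ∑ u, ∑ v, x u * x v * A u v := by
          simp only [dotProduct, mulVec, Finset.mul_sum]
          exact Finset.sum_congr rfl fun u _ => Finset.sum_congr rfl fun v _ => by ring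
      _ = ∑ u, ∑ v, ∑ i, ∑ j, ((if u ∈ S i then (1:ℝ) else 0) * if v ∈ S j then (1:ℝ) else 0)
            * (c i * c j * A u v) :=
          Finset.sum_congr rfl fun u _ => Finset.sum_congr rfl fun v _ => e2 u v
      _ = ∑ u, ∑ i, ∑ v, ∑ j, ((if u ∈ S i then (1:ℝ) else 0) * if v ∈ S j then (1:ℝ) else 0)
            * (c i * c j * A u v) :=
          Finset.sum_congr rfl fun u _ => Finset.sum_comm
      _ = ∑ i, ∑ u, ∑ v, ∑ j, ((if u ∈ S i then (1:ℝ) else 0) * if v ∈ S j then (1:ℝ) else 0)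
            * (c i * c j * A u v) := Finset.sum_comm
      _ = ∑ i, ∑ u, ∑ j, ∑ v, ((if u ∈ S i then (1:ℝ) else 0) * if v ∈ S j then (1:ℝ) else 0)
            * (c i * c j * A u v) :=
          Finset.sum_congr rfl fun i _ => Finset.sum_congr rfl fun u _ => Finset.sum_comm
      _ = ∑ i, ∑ j, ∑ u, ∑ v, ((if u ∈ S i then (1:ℝ) else 0) * if v ∈ S j then (1:ℝ) else 0)
            * (c i * c j * A u v) :=
          Finset.sum_congr rfl fun i _ => Finset.sum_comm
      _ = ∑ i, ∑ j, c i * c j * B i j :=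
          Finset.sum_congr rfl fun i _ => Finset.sum_congr rfl fun j _ => e3 i j
  -- row bound (off-diagonal)
  have hrow : ∀ i, ∑ j ∈ Finset.univ.erase i, B i j ≤ ((boundaryEdges G (S i)).card : ℝ) := by
    intro i
    rw [← sum_sum_boundary G (S i)]
    have : ∑ j ∈ Finset.univ.erase i, B i j
        = ∑ u ∈ S i, ∑ j ∈ Finset.univ.erase i, ∑ v ∈ S j, A u v := by
      simp only [hBdef]
      exact Finset.sum_comm
    rw [this]
    refine Finset.sum_le_sum fun u _ => ?_
    rw [← Finset.sum_biUnion (fun a _ b _ hab => hdisj a b hab)]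
    refine Finset.sum_le_sum_of_subset_of_nonneg ?_ fun v _ _ => hAnn u v
    intro v hv
    rw [Finset.mem_biUnion] at hv
    obtain ⟨j, hj, hvj⟩ := hv
    rw [Finset.mem_compl]
    exact fun hvi => Finset.disjoint_left.mp (hdisj j i (Finset.ne_of_mem_erase hj)) hvj hvi
  have hdiag : ∀ i, B i i = 2 * ((interiorEdges G (S i)).card : ℝ) := by
    intro i; rw [hBdef]; exact sum_sum_interior G (S i)
  -- full row bound
  have hrowfull : ∀ i, ∑ j, B i j
      ≤ 2 * ((interiorEdges G (S i)).card : ℝ) + ((boundaryEdges G (S i)).card : ℝ) := by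
    intro i
    rw [← Finset.add_sum_erase _ _ (Finset.mem_univ i), hdiag i]
    exact add_le_add le_rfl (hrow i)
  -- symmetric sum identity
  have hsym2 : ∑ i, ∑ j, (c i ^ 2 + c j ^ 2) / 2 * B i j = ∑ i, ∑ j, c i ^ 2 * B i j := by
    have h1 : ∑ i, ∑ j, c j ^ 2 / 2 * B i j = ∑ i, ∑ j, c i ^ 2 / 2 * B i j := by
      rw [Finset.sum_comm]
      exact Finset.sum_congr rfl fun i _ => Finset.sum_congr rfl fun j _ => by rw [hBsymm i j]
    have h2 : ∑ i, ∑ j, (c i ^ 2 + c j ^ 2) / 2 * B i j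
        = ∑ i, ∑ j, c i ^ 2 / 2 * B i j + ∑ i, ∑ j, c j ^ 2 / 2 * B i j := by
      rw [← Finset.sum_add_distrib]
      refine Finset.sum_congr rfl fun i _ => ?_
      rw [← Finset.sum_add_distrib]
      exact Finset.sum_congr rfl fun j _ => by ring
    rw [h2, h1, ← Finset.sum_add_distrib]
    refine Finset.sum_congr rfl fun i _ => ?_
    rw [← Finset.sum_add_distrib]
    exact Finset.sum_congr rfl fun j _ => by ring
  -- termwise lower bound
  have hterm : ∀ i j : Fin k, (if j = i then 2 * c i ^ 2 * B i i else 0)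
      - (c i ^ 2 + c j ^ 2) / 2 * B i j ≤ c i * c j * B i j := by
    intro i j
    split_ifs with h
    · subst h; nlinarith [hBnn j j]
    · have := hBnn i j
      nlinarith [sq_nonneg (c i + c j)]
  have hmain : 2 * (∑ i, c i ^ 2 * B i i) - ∑ i, ∑ j, c i ^ 2 * B i j
      ≤ x ⬝ᵥ (A *ᵥ x) := by
    rw [hexp, ← hsym2]
    have : ∑ i, ∑ j, ((if j = i then 2 * c i ^ 2 * B i i else 0)
        - (c i ^ 2 + c j ^ 2) / 2 * B i j) ≤ ∑ i, ∑ j, c i * c j * B i j :=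
      Finset.sum_le_sum fun i _ => Finset.sum_le_sum fun j _ => hterm i j
    calc 2 * (∑ i, c i ^ 2 * B i i) - ∑ i, ∑ j, (c i ^ 2 + c j ^ 2) / 2 * B i j
        = ∑ i, ∑ j, ((if j = i then 2 * c i ^ 2 * B i i else 0)
            - (c i ^ 2 + c j ^ 2) / 2 * B i j) := by
          have hsplit : ∑ i, ∑ j, ((if j = i then 2 * c i ^ 2 * B i i else 0)
              - (c i ^ 2 + c j ^ 2) / 2 * B i j)
              = ∑ i, ((∑ j, if j = i then 2 * c i ^ 2 * B i i else 0)
                - ∑ j, (c i ^ 2 + c j ^ 2) / 2 * B i j) :=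
            Finset.sum_congr rfl fun i _ => Finset.sum_sub_distrib _ _
          rw [hsplit, Finset.sum_sub_distrib]
          congr 1
          rw [Finset.mul_sum]
          exact Finset.sum_congr rfl fun i _ => by rw [Finset.sum_ite_eq' univ i
            (fun _ => 2 * c i ^ 2 * B i i), if_pos (Finset.mem_univ i)]; ring
      _ ≤ ∑ i, ∑ j, c i * c j * B i j := this
  have hsum_le : ∑ i, ∑ j, c i ^ 2 * B i j
      ≤ ∑ i, c i ^ 2 * (2 * ((interiorEdges G (S i)).card : ℝ)
        + ((boundaryEdges G (S i)).card : ℝ)) := by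
    refine Finset.sum_le_sum fun i _ => ?_
    rw [← Finset.mul_sum]
    exact mul_le_mul_of_nonneg_left (hrowfull i) (sq_nonneg _)
  have hfinal : 0 < ∑ i, c i ^ 2 * (2 * ((interiorEdges G (S i)).card : ℝ)
      - ((boundaryEdges G (S i)).card : ℝ)) := by
    obtain ⟨i₀, hi₀⟩ := Function.ne_iff.mp hc
    refine Finset.sum_pos' (fun i _ => mul_nonneg (sq_nonneg _) (by linarith [hedge i]))
      ⟨i₀, Finset.mem_univ i₀, ?_⟩
    exact mul_pos (pow_two_pos_of_ne_zero hi₀) (by linarith [hedge i₀])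
  have hrel : ∑ i, c i ^ 2 * (2 * ((interiorEdges G (S i)).card : ℝ)
      - ((boundaryEdges G (S i)).card : ℝ))
      = 2 * (∑ i, c i ^ 2 * B i i) - ∑ i, c i ^ 2 * (2 * ((interiorEdges G (S i)).card : ℝ)
        + ((boundaryEdges G (S i)).card : ℝ)) := by
    rw [Finset.mul_sum, ← Finset.sum_sub_distrib]
    exact Finset.sum_congr rfl fun i _ => by rw [hdiag i]; ring
  linarith

/-- If `S₁, …, S_k` (`k ≥ 1`) are pairwise disjoint subsets of the vertices with
`vol Sᵢ ≤ (vol G)/2` and `2|E(Sᵢ)| > |∂Sᵢ|` for every `i`, then `Q(Sᵢ) > 0` for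
every `i` and the modularity matrix has at least `k-1` positive eigenvalues
(with multiplicity). -/
theorem communities_positive_eigenvalues (G : SimpleGraph (Fin n))
    [DecidableRel G.Adj] (hG : G.Connected) (hM : (modM G).IsHermitian)
    (k : ℕ) (hk : 1 ≤ k) (S : Fin k → Finset (Fin n))
    (hdisj : ∀ i j, i ≠ j → Disjoint (S i) (S j))
    (hvol : ∀ i, volS G (S i) ≤ volG G / 2)
    (hedge : ∀ i, ((boundaryEdges G (S i)).card : ℝ) < 2 * ((interiorEdges G (S i)).card : ℝ)) :
    (∀ i, 0 < Qedge G (S i)) ∧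
    k - 1 ≤ (Finset.univ.filter (fun i => 0 < hM.eigenvalues i)).card := by
  classical
  have hvolG0 : 0 ≤ volG G := Finset.sum_nonneg fun i _ => Nat.cast_nonneg _
  refine ⟨fun i => Qedge_pos G (S i) hvolG0 (hvol i) (hedge i), ?_⟩
  by_contra hcon
  push_neg at hcon
  set pos := Finset.univ.filter (fun i => 0 < hM.eigenvalues i) with hpos
  have hklt : pos.card + 1 < k := by omega
  set d := degR G with hd
  set U := (Matrix.IsHermitian.eigenvectorUnitary hM : Matrix (Fin n) (Fin n) ℝ) with hU
  let Φ : (Fin k → ℝ) →ₗ[ℝ] (Fin n → ℝ) :=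
  { toFun := fun c u => ∑ i, c i * (if u ∈ S i then (1:ℝ) else 0)
    map_add' := fun c c' => by
      funext u
      simp only [Pi.add_apply, add_mul]
      exact Finset.sum_add_distrib
    map_smul' := fun r c => by
      funext u
      simp only [Pi.smul_apply, smul_eq_mul, RingHom.id_apply]
      rw [Finset.mul_sum]
      exact Finset.sum_congr rfl fun i _ => by ring }
  let f₁ : (Fin n → ℝ) →ₗ[ℝ] ℝ :=
  { toFun := fun y => d ⬝ᵥ y
    map_add' := fun y z => dotProduct_add d y z
    map_smul' := fun r y => by simp }
  let f₂ : (Fin n → ℝ) →ₗ[ℝ] ({ j // j ∈ pos } → ℝ) :=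
  { toFun := fun y j => (star U *ᵥ y) (j : Fin n)
    map_add' := fun y z => by funext j; simp [Matrix.mulVec_add]
    map_smul' := fun r y => by funext j; simp [Matrix.mulVec_smul] }
  set L := LinearMap.prod (f₁ ∘ₗ Φ) (f₂ ∘ₗ Φ) with hL
  have hkerL : LinearMap.ker L ≠ ⊥ := by
    intro hbot
    have hinj : Function.Injective L := LinearMap.ker_eq_bot.mp hbot
    have hle := LinearMap.finrank_le_finrank_of_injective hinj
    rw [Module.finrank_fintype_fun_eq_card, Fintype.card_fin] at hle
    have : Module.finrank ℝ (ℝ × ({ j // j ∈ pos } → ℝ)) = 1 + pos.card := by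
      rw [Module.finrank_prod, Module.finrank_self, Module.finrank_fintype_fun_eq_card,
        Fintype.card_coe]
    rw [this] at hle
    omega
  obtain ⟨c, hcker, hc0⟩ := Submodule.exists_mem_ne_zero_of_ne_bot hkerL
  rw [LinearMap.mem_ker] at hcker
  set x : Fin n → ℝ := Φ c with hx
  have hdx : d ⬝ᵥ x = 0 := congrArg Prod.fst hcker
  have hyzero : ∀ j ∈ pos, (star U *ᵥ x) j = 0 := fun j hj =>
    congrFun (congrArg Prod.snd hcker) ⟨j, hj⟩
  -- quadratic form value via spectral theorem
  have hspec : x ⬝ᵥ (modM G *ᵥ x) = ∑ j, hM.eigenvalues j * ((star U *ᵥ x) j) ^ 2 := by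
    conv_lhs => rw [hM.spectral_theorem, Unitary.conjStarAlgAut_apply]
    rw [← Matrix.mulVec_mulVec, ← Matrix.mulVec_mulVec, Matrix.dotProduct_mulVec]
    have hvm : x ᵥ* U = star U *ᵥ x := by
      rw [Matrix.star_eq_conjTranspose, Matrix.conjTranspose_eq_transpose_of_trivial,
        Matrix.mulVec_transpose]
    rw [hvm]
    rw [show (Matrix.diagonal (RCLike.ofReal ∘ hM.eigenvalues) *ᵥ (star U *ᵥ x))
        = fun j => hM.eigenvalues j * (star U *ᵥ x) j from funext fun j => by
      rw [Matrix.mulVec_diagonal]; simp [RCLike.ofReal_real_eq_id]]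
    rw [dotProduct]
    exact Finset.sum_congr rfl fun j _ => by ring
  have hform_le : x ⬝ᵥ (modM G *ᵥ x) ≤ 0 := by
    rw [hspec]
    refine Finset.sum_nonpos fun j _ => ?_
    by_cases hj : j ∈ pos
    · rw [hyzero j hj]; simp
    · have hj' : ¬ 0 < hM.eigenvalues j := by
        intro h; exact hj (Finset.mem_filter.mpr ⟨Finset.mem_univ j, h⟩)
      exact mul_nonpos_of_nonpos_of_nonneg (le_of_not_gt hj') (sq_nonneg _)
  -- the rank-one correction vanishes
  have hMx : x ⬝ᵥ (modM G *ᵥ x) = x ⬝ᵥ (G.adjMatrix ℝ *ᵥ x) := by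
    rw [modM, Matrix.sub_mulVec, dotProduct_sub, Matrix.smul_mulVec, dotProduct_smul]
    have hvv : Matrix.vecMulVec d d *ᵥ x = fun u => d u * (d ⬝ᵥ x) := by
      funext u
      rw [Matrix.mulVec, dotProduct, dotProduct, Finset.mul_sum]
      exact Finset.sum_congr rfl fun v _ => by rw [Matrix.vecMulVec_apply]; ring
    rw [hvv, hdx]
    simp
  have hpos' := quad_form_pos G S hdisj hedge c hc0 x (fun u => rfl)
  rw [← hMx] at hpos'
  linarith
end
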